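/- arXiv:1408.0157 — 9 statements merged into one kernel-verified Lean document; each statement's English description precedes it below -/
import Mathlib

section
/- Let μ : (0,∞) → ℝ be Lebesgue integrable. Then for every ω ∈ ℝ, the function y ↦ ((e^{−iωy} − 1)/y)·μ(y) is integrable on (0,∞) and ∫₀^∞ ((e^{−iωy} − 1)/y) μ(y) dy = −i ∫₀^ω μ̂(ζ) dζ, where the outer integral on the right is the oriented integral (equal to −∫_ω^0 when ω < 0). -/
open MeasureTheory

lemma exp_interval_integral (ω y : ℝ) (hy : y ≠ 0) :
    ∫ ζ in (0:ℝ)..ω, Complex.exp (-Complex.I * ζ * y)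
      = (Complex.exp (-Complex.I * ω * y) - 1) / (-Complex.I * y) := by
  have hc : (-Complex.I * (y:ℂ)) ≠ 0 := by
    simp [Complex.I_ne_zero, hy]
  have h := integral_exp_mul_complex (a := 0) (b := ω) hc
  have h2 : ∀ ζ : ℝ, -Complex.I * (y:ℂ) * (ζ:ℂ) = -Complex.I * ζ * y := by
    intro ζ; ring
  simp only [h2] at h
  simpa using h

lemma div_eq_neg_I_mul (ω y : ℝ) (hy : y ≠ 0) :
    (Complex.exp (-Complex.I * ω * y) - 1) / (y:ℂ)
      = -Complex.I * ∫ ζ in (0:ℝ)..ω, Complex.exp (-Complex.I * ζ * y) := by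
  rw [exp_interval_integral ω y hy]
  have hy' : (y:ℂ) ≠ 0 := by exact_mod_cast hy
  field_simp

lemma normExpSubOneDivLe (ω y : ℝ) (hy : y ≠ 0) :
    ‖(Complex.exp (-Complex.I * ω * y) - 1) / (y:ℂ)‖ ≤ |ω| := by
  rw [div_eq_neg_I_mul ω y hy, norm_mul]
  simp only [norm_neg, Complex.norm_I, one_mul]
  have := intervalIntegral.norm_integral_le_of_norm_le_const
    (a := 0) (b := ω) (C := 1) (f := fun ζ : ℝ => Complex.exp (-Complex.I * ζ * y))
    (fun x _ => by simp [Complex.norm_exp])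
  simpa using this

theorem stmt0 (μ : ℝ → ℝ) (hμ : IntegrableOn μ (Set.Ioi 0)) (ω : ℝ) :
    IntegrableOn (fun y : ℝ =>
      ((Complex.exp (-Complex.I * ω * y) - 1) / y) * (μ y : ℂ)) (Set.Ioi 0) ∧
    ∫ y in Set.Ioi (0:ℝ), ((Complex.exp (-Complex.I * ω * y) - 1) / y) * (μ y : ℂ)
      = -Complex.I *
        ∫ ζ in (0:ℝ)..ω, ∫ y in Set.Ioi (0:ℝ), (μ y : ℂ) * Complex.exp (-Complex.I * ζ * y) := by
  have hμc : AEStronglyMeasurable (fun y : ℝ => (μ y : ℂ))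
      (volume.restrict (Set.Ioi 0)) :=
    Complex.continuous_ofReal.comp_aestronglyMeasurable hμ.1
  -- integrability of the left-hand side
  have hmeasL : AEStronglyMeasurable (fun y : ℝ =>
      ((Complex.exp (-Complex.I * ω * y) - 1) / y) * (μ y : ℂ))
      (volume.restrict (Set.Ioi 0)) := by
    apply AEStronglyMeasurable.mul _ hμc
    apply Measurable.aestronglyMeasurable
    fun_prop
  have hIntL : IntegrableOn (fun y : ℝ =>
      ((Complex.exp (-Complex.I * ω * y) - 1) / y) * (μ y : ℂ)) (Set.Ioi 0) := by
    apply Integrable.mono (hμ.norm.const_mul |ω|) hmeasL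
    filter_upwards [ae_restrict_mem measurableSet_Ioi] with y hy
    have hy' : y ≠ 0 := ne_of_gt hy
    rw [norm_mul]
    have h1 := normExpSubOneDivLe ω y hy'
    calc ‖(Complex.exp (-Complex.I * ω * y) - 1) / (y:ℂ)‖ * ‖(μ y : ℂ)‖
        ≤ |ω| * ‖(μ y : ℂ)‖ := by
          apply mul_le_mul_of_nonneg_right h1 (norm_nonneg _)
      _ ≤ ‖|ω| * ‖μ y‖‖ := by
          simp [abs_mul, abs_abs, Complex.norm_real]
  refine ⟨hIntL, ?_⟩
  -- Fubini part
  have hswap : ∀ a b : ℝ,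
      ∫ ζ in Set.Ioc a b, ∫ y in Set.Ioi (0:ℝ), (μ y : ℂ) * Complex.exp (-Complex.I * ζ * y)
      = ∫ y in Set.Ioi (0:ℝ), ∫ ζ in Set.Ioc a b, (μ y : ℂ) * Complex.exp (-Complex.I * ζ * y) := by
    intro a b
    apply MeasureTheory.integral_integral_swap
    have hmeas : AEStronglyMeasurable
        (fun p : ℝ × ℝ => (μ p.2 : ℂ) * Complex.exp (-Complex.I * p.1 * p.2))
        ((volume.restrict (Set.Ioc a b)).prod (volume.restrict (Set.Ioi 0))) := by
      apply AEStronglyMeasurable.mul (hμc.comp_snd)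
      apply Continuous.aestronglyMeasurable
      fun_prop
    have hdom : Integrable (fun p : ℝ × ℝ => (1:ℝ) * ‖μ p.2‖)
        ((volume.restrict (Set.Ioc a b)).prod (volume.restrict (Set.Ioi 0))) :=
      Integrable.mul_prod (integrable_const 1) hμ.norm
    apply Integrable.mono hdom hmeas
    filter_upwards with p
    simp [Complex.norm_exp, abs_of_nonneg (abs_nonneg (μ p.2))]
  have hinner : ∀ s : Set ℝ, ∀ᵐ y ∂(volume.restrict (Set.Ioi (0:ℝ))),
      ∫ ζ in s, (μ y : ℂ) * Complex.exp (-Complex.I * ζ * y)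
        = (μ y : ℂ) * ∫ ζ in s, Complex.exp (-Complex.I * ζ * y) := by
    intro s
    filter_upwards with y
    rw [integral_const_mul]
  rcases le_total 0 ω with hω | hω
  · rw [intervalIntegral.integral_of_le hω, hswap 0 ω]
    rw [integral_congr_ae (hinner (Set.Ioc 0 ω)), ← integral_const_mul]
    apply integral_congr_ae
    filter_upwards [ae_restrict_mem measurableSet_Ioi] with y hy
    have hy' : y ≠ 0 := ne_of_gt hy
    rw [← intervalIntegral.integral_of_le hω, div_eq_neg_I_mul ω y hy']
    ring
  · rw [intervalIntegral.integral_symm, intervalIntegral.integral_of_le hω, hswap ω 0]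
    rw [integral_congr_ae (hinner (Set.Ioc ω 0))]
    rw [← integral_neg, ← integral_const_mul]
    apply integral_congr_ae
    filter_upwards [ae_restrict_mem measurableSet_Ioi] with y hy
    have hy' : y ≠ 0 := ne_of_gt hy
    have : ∫ ζ in (0:ℝ)..ω, Complex.exp (-Complex.I * ζ * y)
        = - ∫ ζ in Set.Ioc ω 0, Complex.exp (-Complex.I * ζ * y) := by
      rw [← intervalIntegral.integral_of_le hω, intervalIntegral.integral_symm]
    rw [div_eq_neg_I_mul ω y hy', this]
    ring
end

section
/- Let μ : (0,∞) → ℝ be Lebesgue integrable. Then for every ω ∈ ℝ, the function y ↦ ((e^{−iωy} + e^{iωy} − 2)/y)·μ(y) is integrable on (0,∞) and [𝒢₁μ](ω) := ∫₀^∞ ((e^{−iωy} + e^{iωy} − 2)/y) μ(y) dy = 2·Im ∫₀^ω μ̂(ζ) dζ, where the outer integral on the right is the oriented integral. -/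
open MeasureTheory

open Complex in
lemma aux_exp_I_sub_one (t : ℝ) : ‖Complex.exp (t * Complex.I) - 1‖ ≤ |t| := by
  have h : Complex.normSq (Complex.exp (t * Complex.I) - 1) ≤ t ^ 2 := by
    rw [Complex.normSq_apply]
    simp only [Complex.sub_re, Complex.sub_im, Complex.exp_ofReal_mul_I_re,
      Complex.exp_ofReal_mul_I_im, Complex.one_re, Complex.one_im]
    have h1 : Real.cos (t/2)^2 = 1/2 + Real.cos t / 2 := by
      have := Real.cos_sq (t/2)
      rwa [mul_div_cancel₀ t (two_ne_zero)] at this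
    have h2 := Real.abs_sin_le_abs (x := t / 2)
    have h5 : Real.sin (t/2)^2 ≤ (t/2)^2 := by
      have := pow_le_pow_left₀ (abs_nonneg (Real.sin (t/2))) h2 2
      rwa [_root_.sq_abs, _root_.sq_abs] at this
    have h3 := Real.sin_sq_add_cos_sq (t/2)
    have h4 := Real.sin_sq_add_cos_sq t
    nlinarith
  have := Real.sqrt_le_sqrt h
  rw [Real.sqrt_sq_eq_abs] at this
  rwa [Complex.norm_def]

lemma aux_swap (μ : ℝ → ℝ) (hμ : IntegrableOn μ (Set.Ioi 0)) (a b : ℝ) :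
    ∫ ζ in Set.Ioc a b, ∫ y in Set.Ioi (0:ℝ), (μ y : ℂ) * Complex.exp (-Complex.I * ζ * y)
      = ∫ y in Set.Ioi (0:ℝ), ∫ ζ in Set.Ioc a b, (μ y : ℂ) * Complex.exp (-Complex.I * ζ * y) := by
  apply integral_integral_swap
  have hmeas : AEStronglyMeasurable
      (fun z : ℝ × ℝ => (μ z.2 : ℂ) * Complex.exp (-Complex.I * z.1 * z.2))
      ((volume.restrict (Set.Ioc a b)).prod (volume.restrict (Set.Ioi 0))) := by
    apply AEStronglyMeasurable.mul
    · exact (Complex.continuous_ofReal.comp_aestronglyMeasurable hμ.aestronglyMeasurable).comp_snd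
    · exact (Complex.continuous_exp.comp (by fun_prop)).aestronglyMeasurable
  refine Integrable.mono' (g := fun z : ℝ × ℝ => 1 * |μ z.2|) ?_ hmeas ?_
  · exact (integrable_const (1:ℝ)).mul_prod hμ.norm
  · filter_upwards with z
    rw [Function.uncurry, norm_mul, Complex.norm_exp]
    simp

lemma aux_key (μ : ℝ → ℝ) (hμ : IntegrableOn μ (Set.Ioi 0)) {a b : ℝ} (hab : a ≤ b) :
    ∫ ζ in a..b, ∫ y in Set.Ioi (0:ℝ), (μ y : ℂ) * Complex.exp (-Complex.I * ζ * y)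
      = ∫ y in Set.Ioi (0:ℝ), (μ y : ℂ) *
          ((Complex.exp (-Complex.I * y * b) - Complex.exp (-Complex.I * y * a)) / (-Complex.I * y)) := by
  rw [intervalIntegral.integral_of_le hab, aux_swap μ hμ a b]
  apply setIntegral_congr_fun measurableSet_Ioi
  intro y hy
  have hy0 : (0:ℝ) < y := hy
  have hc : -Complex.I * (y:ℂ) ≠ 0 := by
    simp [Complex.I_ne_zero, Complex.ofReal_ne_zero, ne_of_gt hy0]
  have hrw : ∀ ζ : ℝ, -Complex.I * (ζ:ℂ) * (y:ℂ) = (-Complex.I * y) * ζ := by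
    intro ζ; ring
  simp only [hrw]
  rw [integral_const_mul, ← intervalIntegral.integral_of_le hab,
    integral_exp_mul_complex hc]

theorem stmt1 (μ : ℝ → ℝ) (hμ : IntegrableOn μ (Set.Ioi 0)) (ω : ℝ) :
    IntegrableOn (fun y : ℝ =>
      ((Complex.exp (-Complex.I * ω * y) + Complex.exp (Complex.I * ω * y) - 2) / y) * (μ y : ℂ))
      (Set.Ioi 0) ∧
    ∫ y in Set.Ioi (0:ℝ),
        ((Complex.exp (-Complex.I * ω * y) + Complex.exp (Complex.I * ω * y) - 2) / y) * (μ y : ℂ)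
      = ((2 * (∫ ζ in (0:ℝ)..ω,
            ∫ y in Set.Ioi (0:ℝ), (μ y : ℂ) * Complex.exp (-Complex.I * ζ * y)).im : ℝ) : ℂ) := by
  -- Part 1: integrability of the left-hand side integrand
  have hI : IntegrableOn (fun y : ℝ =>
      ((Complex.exp (-Complex.I * ω * y) + Complex.exp (Complex.I * ω * y) - 2) / y) * (μ y : ℂ))
      (Set.Ioi 0) := by
    refine Integrable.mono' (g := fun y => 2 * |ω| * |μ y|) (hμ.norm.const_mul _) ?_ ?_
    · apply AEStronglyMeasurable.mul
      · apply Measurable.aestronglyMeasurable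
        fun_prop
      · exact Complex.continuous_ofReal.comp_aestronglyMeasurable hμ.aestronglyMeasurable
    · filter_upwards [ae_restrict_mem measurableSet_Ioi] with y hy
      have hy0 : (0:ℝ) < y := hy
      have e1 : -Complex.I * (ω:ℂ) * (y:ℂ) = ((-(ω*y) : ℝ):ℂ) * Complex.I := by push_cast; ring
      have e2 : Complex.I * (ω:ℂ) * (y:ℂ) = (((ω*y) : ℝ):ℂ) * Complex.I := by push_cast; ring
      have h1 := aux_exp_I_sub_one (-(ω*y))
      have h2 := aux_exp_I_sub_one (ω*y)
      have hnum : ‖Complex.exp (-Complex.I * ω * y) + Complex.exp (Complex.I * ω * y) - 2‖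
          ≤ 2 * |ω| * y := by
        calc ‖Complex.exp (-Complex.I * ω * y) + Complex.exp (Complex.I * ω * y) - 2‖
            = ‖(Complex.exp (((-(ω*y) : ℝ):ℂ) * Complex.I) - 1)
                + (Complex.exp ((((ω*y) : ℝ):ℂ) * Complex.I) - 1)‖ := by rw [e1, e2]; congr 1; ring
          _ ≤ ‖Complex.exp (((-(ω*y) : ℝ):ℂ) * Complex.I) - 1‖
                + ‖Complex.exp ((((ω*y) : ℝ):ℂ) * Complex.I) - 1‖ :=
              norm_add_le _ _
          _ ≤ |(-(ω*y))| + |ω*y| := add_le_add h1 h2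
          _ = 2 * |ω| * y := by rw [abs_neg, abs_mul, abs_of_pos hy0]; ring
      rw [norm_mul, norm_div, Complex.norm_real, Complex.norm_real, Real.norm_eq_abs,
        Real.norm_eq_abs, abs_of_pos hy0]
      calc ‖Complex.exp (-Complex.I * ω * y) + Complex.exp (Complex.I * ω * y) - 2‖ / y * |μ y|
          ≤ (2 * |ω| * y) / y * |μ y| := by gcongr
        _ = 2 * |ω| * |μ y| := by field_simp
  refine ⟨hI, ?_⟩
  -- the auxiliary function G
  set G : ℝ → ℂ := fun y => (μ y : ℂ) *
      ((Complex.exp (-Complex.I * y * ω) - 1) / (-Complex.I * y)) with hGdef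
  have hGint : IntegrableOn G (Set.Ioi 0) := by
    refine Integrable.mono' (g := fun y => |ω| * |μ y|) (hμ.norm.const_mul _) ?_ ?_
    · apply AEStronglyMeasurable.mul
      · exact Complex.continuous_ofReal.comp_aestronglyMeasurable hμ.aestronglyMeasurable
      · apply Measurable.aestronglyMeasurable; fun_prop
    · filter_upwards [ae_restrict_mem measurableSet_Ioi] with y hy
      have hy0 : (0:ℝ) < y := hy
      have e1 : -Complex.I * (y:ℂ) * (ω:ℂ) = ((-(ω*y) : ℝ):ℂ) * Complex.I := by push_cast; ring
      have h1 := aux_exp_I_sub_one (-(ω*y))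
      rw [hGdef]
      simp only []
      rw [norm_mul, norm_div, Complex.norm_real, Real.norm_eq_abs, e1]
      have habs : ‖-Complex.I * (y:ℂ)‖ = y := by
        simp [abs_of_pos hy0]
      rw [habs]
      calc |μ y| * (‖Complex.exp (((-(ω*y) : ℝ):ℂ) * Complex.I) - 1‖ / y)
          ≤ |μ y| * (|(-(ω*y))| / y) := by gcongr
        _ = |ω| * |μ y| := by rw [abs_neg, abs_mul, abs_of_pos hy0]; field_simp
  -- the inner (oriented) integral equals ∫ G
  have hC : (∫ ζ in (0:ℝ)..ω, ∫ y in Set.Ioi (0:ℝ), (μ y : ℂ) * Complex.exp (-Complex.I * ζ * y))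
      = ∫ y in Set.Ioi (0:ℝ), G y := by
    rcases le_or_gt 0 ω with h | h
    · rw [aux_key μ hμ h]
      apply setIntegral_congr_fun measurableSet_Ioi
      intro y _
      simp [hGdef]
    · rw [intervalIntegral.integral_symm, aux_key μ hμ (le_of_lt h), ← integral_neg]
      apply setIntegral_congr_fun measurableSet_Ioi
      intro y _
      simp only [hGdef, Complex.ofReal_zero, mul_zero, Complex.exp_zero]
      ring
  -- pointwise description of the imaginary part of G
  have him : ∀ y ∈ Set.Ioi (0:ℝ), (G y).im = μ y * ((Real.cos (ω*y) - 1) / y) := by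
    intro y hy
    have hy0 : (0:ℝ) < y := hy
    have hz : Complex.exp (-Complex.I * (y:ℂ) * (ω:ℂ))
        = ((Real.cos (ω*y) : ℝ):ℂ) - ((Real.sin (ω*y) : ℝ):ℂ) * Complex.I := by
      rw [show -Complex.I * (y:ℂ) * (ω:ℂ) = ((-(ω*y) : ℝ):ℂ) * Complex.I by push_cast; ring,
        Complex.exp_mul_I, ← Complex.ofReal_cos, ← Complex.ofReal_sin, Real.cos_neg, Real.sin_neg]
      push_cast; ring
    rw [hGdef]
    simp only [hz]
    simp only [Complex.mul_im, Complex.ofReal_re, Complex.ofReal_im, Complex.div_im,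
      Complex.div_re, Complex.sub_re, Complex.sub_im, Complex.mul_re, Complex.I_re, Complex.I_im,
      Complex.one_re, Complex.one_im, Complex.neg_re, Complex.neg_im, Complex.normSq_apply]
    field_simp
    ring
  -- pointwise description of the left-hand side integrand
  have hpt : ∀ y : ℝ,
      ((Complex.exp (-Complex.I * ω * y) + Complex.exp (Complex.I * ω * y) - 2) / y) * (μ y : ℂ)
        = (((2 * Real.cos (ω*y) - 2) / y * μ y : ℝ) : ℂ) := by
    intro y
    have hz1 : Complex.exp (-Complex.I * (ω:ℂ) * (y:ℂ))
        = ((Real.cos (ω*y) : ℝ):ℂ) - ((Real.sin (ω*y) : ℝ):ℂ) * Complex.I := by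
      rw [show -Complex.I * (ω:ℂ) * (y:ℂ) = ((-(ω*y) : ℝ):ℂ) * Complex.I by push_cast; ring,
        Complex.exp_mul_I, ← Complex.ofReal_cos, ← Complex.ofReal_sin, Real.cos_neg, Real.sin_neg]
      push_cast; ring
    have hz2 : Complex.exp (Complex.I * (ω:ℂ) * (y:ℂ))
        = ((Real.cos (ω*y) : ℝ):ℂ) + ((Real.sin (ω*y) : ℝ):ℂ) * Complex.I := by
      rw [show Complex.I * (ω:ℂ) * (y:ℂ) = (((ω*y) : ℝ):ℂ) * Complex.I by push_cast; ring,
        Complex.exp_mul_I, ← Complex.ofReal_cos, ← Complex.ofReal_sin]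
    rw [hz1, hz2]
    push_cast
    ring
  -- put everything together
  rw [show (fun y : ℝ =>
      ((Complex.exp (-Complex.I * ω * y) + Complex.exp (Complex.I * ω * y) - 2) / y) * (μ y : ℂ))
      = fun y : ℝ => (((2 * Real.cos (ω*y) - 2) / y * μ y : ℝ) : ℂ) from funext hpt, hC]
  have h1 : (∫ y in Set.Ioi (0:ℝ), (((2 * Real.cos (ω*y) - 2) / y * μ y : ℝ) : ℂ))
      = (((∫ y in Set.Ioi (0:ℝ), (2 * Real.cos (ω*y) - 2) / y * μ y) : ℝ) : ℂ) :=
    integral_ofReal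
  have h2 : (∫ y in Set.Ioi (0:ℝ), Complex.im (G y)) = Complex.im (∫ y in Set.Ioi (0:ℝ), G y) :=
    integral_im hGint
  rw [h1, ← h2, Complex.ofReal_inj, ← integral_const_mul]
  apply setIntegral_congr_fun measurableSet_Ioi
  intro y hy
  show (2 * Real.cos (ω*y) - 2) / y * μ y = 2 * (G y).im
  rw [him y hy]
  ring
end

section
/- Let μ : (0,∞) → ℝ be Lebesgue integrable. Then for every ω ∈ ℝ, the function y ↦ ((e^{−iωy} − 1 + iωy)/y²)·μ(y) is integrable on (0,∞) and ∫₀^∞ ((e^{−iωy} − 1 + iωy)/y²) μ(y) dy = −∫₀^ω ∫₀^η μ̂(ζ) dζ dη, where the iterated integrals on the right are oriented integrals. -/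
open MeasureTheory

lemma aux_norm_exp_eq_one (ζ y : ℝ) : ‖Complex.exp (-Complex.I * ζ * y)‖ = 1 := by
  rw [Complex.norm_exp]
  have : (-Complex.I * ζ * y).re = 0 := by simp
  rw [this, Real.exp_zero]

lemma aux_exp_sub_one_le (x : ℝ) : ‖Complex.exp (Complex.I * x) - 1‖ ≤ |x| := by
  have h := integral_exp_mul_complex (a := (0:ℝ)) (b := x) Complex.I_ne_zero
  have h2 : Complex.exp (Complex.I * x) - 1
      = Complex.I * ∫ t in (0:ℝ)..x, Complex.exp (Complex.I * t) := by
    rw [h, Complex.ofReal_zero, mul_zero, Complex.exp_zero,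
      mul_div_cancel₀ _ Complex.I_ne_zero]
  rw [h2, norm_mul, Complex.norm_I, one_mul]
  have := intervalIntegral.norm_integral_le_of_norm_le_const
    (C := 1) (f := fun t : ℝ => Complex.exp (Complex.I * t)) (a := 0) (b := x)
    (fun t _ => le_of_eq (by
      rw [Complex.norm_exp]
      have h0 : (Complex.I * (t:ℂ)).re = 0 := by simp
      rw [h0, Real.exp_zero]))
  simpa using this

lemma aux_swap_s2 (a b : ℝ) (f : ℝ → ℝ → ℂ)
    (hf : Integrable (Function.uncurry f)
      ((volume.restrict (Set.uIoc a b)).prod (volume.restrict (Set.Ioi (0:ℝ))))) :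
    (∫ t in a..b, ∫ y in Set.Ioi (0:ℝ), f t y)
      = ∫ y in Set.Ioi (0:ℝ), ∫ t in a..b, f t y := by
  rcases le_total a b with hab | hab
  · rw [Set.uIoc_of_le hab] at hf
    rw [intervalIntegral.integral_of_le hab, MeasureTheory.integral_integral_swap hf]
    simp_rw [intervalIntegral.integral_of_le hab]
  · rw [Set.uIoc_of_ge hab] at hf
    have e1 : ∀ g : ℝ → ℂ, (∫ t in a..b, g t) = -∫ t in Set.Ioc b a, g t := fun g => by
      rw [intervalIntegral.integral_symm b a, intervalIntegral.integral_of_le hab]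
    simp_rw [e1]
    rw [MeasureTheory.integral_neg, neg_inj, MeasureTheory.integral_integral_swap hf]

lemma aux_prodInt (μ : ℝ → ℝ) (hμ : IntegrableOn μ (Set.Ioi 0)) (a b : ℝ) (g : ℝ → ℝ → ℂ)
    (hg : Measurable (Function.uncurry g)) (C : ℝ)
    (hC : ∀ t ∈ Set.uIoc a b, ∀ y ∈ Set.Ioi (0:ℝ), ‖g t y‖ ≤ C) :
    Integrable (Function.uncurry fun t y => (μ y : ℂ) * g t y)
      ((volume.restrict (Set.uIoc a b)).prod (volume.restrict (Set.Ioi (0:ℝ)))) := by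
  haveI : IsFiniteMeasure (volume.restrict (Set.uIoc a b)) :=
    ⟨by rw [Measure.restrict_apply_univ]; exact measure_Ioc_lt_top⟩
  have hmeas : AEStronglyMeasurable (Function.uncurry fun t y => (μ y : ℂ) * g t y)
      ((volume.restrict (Set.uIoc a b)).prod (volume.restrict (Set.Ioi (0:ℝ)))) := by
    exact ((Complex.continuous_ofReal.comp_aestronglyMeasurable
      hμ.aestronglyMeasurable).comp_snd.mul hg.aestronglyMeasurable)
  have hbd : Integrable (fun z : ℝ × ℝ => C * ‖μ z.2‖)
      ((volume.restrict (Set.uIoc a b)).prod (volume.restrict (Set.Ioi (0:ℝ)))) :=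
    (integrable_const C).mul_prod hμ.norm
  refine hbd.mono' hmeas ?_
  have hs : MeasurableSet ((Set.uIoc a b) ×ˢ (Set.Ioi (0:ℝ))) :=
    measurableSet_uIoc.prod measurableSet_Ioi
  rw [Measure.prod_restrict]
  filter_upwards [ae_restrict_mem hs] with p hp
  have : ‖(μ p.2 : ℂ) * g p.1 p.2‖ = ‖μ p.2‖ * ‖g p.1 p.2‖ := by
    rw [norm_mul, Complex.norm_real]
  rw [Function.uncurry, this]
  calc ‖μ p.2‖ * ‖g p.1 p.2‖ ≤ ‖μ p.2‖ * C :=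
        mul_le_mul_of_nonneg_left (hC _ hp.1 _ hp.2) (norm_nonneg _)
    _ = C * ‖μ p.2‖ := mul_comm _ _

theorem stmt2 (μ : ℝ → ℝ) (hμ : IntegrableOn μ (Set.Ioi 0)) (ω : ℝ) :
    IntegrableOn (fun y : ℝ =>
      ((Complex.exp (-Complex.I * ω * y) - 1 + Complex.I * ω * y) / (y:ℂ)^2) * (μ y : ℂ))
      (Set.Ioi 0) ∧
    ∫ y in Set.Ioi (0:ℝ),
        ((Complex.exp (-Complex.I * ω * y) - 1 + Complex.I * ω * y) / (y:ℂ)^2) * (μ y : ℂ)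
      = -∫ η in (0:ℝ)..ω, ∫ ζ in (0:ℝ)..η,
            ∫ y in Set.Ioi (0:ℝ), (μ y : ℂ) * Complex.exp (-Complex.I * ζ * y) := by
  -- the "first antiderivative" kernel
  set h : ℝ → ℝ → ℂ :=
    fun η y => (Complex.exp (-Complex.I * y * η) - 1) / (-Complex.I * y) with hh
  -- step A: inner swap, for every η
  have stepA : ∀ η : ℝ,
      (∫ ζ in (0:ℝ)..η, ∫ y in Set.Ioi (0:ℝ), (μ y : ℂ) * Complex.exp (-Complex.I * ζ * y))
        = ∫ y in Set.Ioi (0:ℝ), (μ y : ℂ) * h η y := by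
    intro η
    have hmeas : Measurable (Function.uncurry
        fun ζ y : ℝ => Complex.exp (-Complex.I * ζ * y)) := by fun_prop
    have hint := aux_prodInt μ hμ 0 η _ hmeas 1
      (fun t _ y _ => le_of_eq (aux_norm_exp_eq_one t y))
    rw [aux_swap_s2 0 η _ hint]
    refine setIntegral_congr_fun measurableSet_Ioi (fun y hy => ?_)
    have hy0 : (y:ℂ) ≠ 0 := Complex.ofReal_ne_zero.mpr (Set.mem_Ioi.mp hy).ne'
    have hc : -Complex.I * y ≠ 0 := by
      simp [Complex.I_ne_zero, hy0]
    rw [intervalIntegral.integral_const_mul]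
    congr 1
    have e : (fun ζ : ℝ => Complex.exp (-Complex.I * ζ * y))
        = fun ζ : ℝ => Complex.exp ((-Complex.I * y) * ζ) := by
      funext ζ; congr 1; ring
    rw [e, integral_exp_mul_complex hc]
    rw [hh]
    rw [Complex.ofReal_zero, mul_zero, Complex.exp_zero]
  -- step B: outer swap
  have hmeasB : Measurable (Function.uncurry h) := by
    rw [hh]; fun_prop
  have hCB : ∀ t ∈ Set.uIoc 0 ω, ∀ y ∈ Set.Ioi (0:ℝ), ‖h t y‖ ≤ |ω| := by
    intro t ht y hy
    have hy0 : (0:ℝ) < y := hy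
    have hnum : ‖Complex.exp (-Complex.I * y * t) - 1‖ ≤ y * |t| := by
      have := aux_exp_sub_one_le (-(y * t))
      have e : Complex.I * ((-(y * t) : ℝ) : ℂ) = -Complex.I * y * t := by
        push_cast; ring
      rw [e] at this
      calc ‖Complex.exp (-Complex.I * ↑y * ↑t) - 1‖ ≤ |(-(y * t))| := this
        _ = y * |t| := by rw [abs_neg, abs_mul, abs_of_pos hy0]
    have hden : ‖(-Complex.I * (y:ℂ))‖ = y := by
      rw [norm_mul]
      simp [Complex.norm_real, abs_of_pos hy0]
    have ht' : |t| ≤ |ω| := by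
      rcases ht with ⟨h1, h2⟩
      rw [abs_le]
      constructor
      · exact le_trans (le_inf (neg_nonpos.mpr (abs_nonneg ω)) (neg_abs_le ω)) h1.le
      · exact h2.trans (sup_le (abs_nonneg ω) (le_abs_self ω))
    rw [hh]
    rw [norm_div, hden]
    rw [div_le_iff₀ hy0]
    calc ‖Complex.exp (-Complex.I * ↑y * ↑t) - 1‖ ≤ y * |t| := hnum
      _ ≤ |ω| * y := by rw [mul_comm]; exact mul_le_mul_of_nonneg_right ht' hy0.le
  have hintB := aux_prodInt μ hμ 0 ω h hmeasB |ω| hCB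
  have stepB := aux_swap_s2 0 ω (fun η y => (μ y : ℂ) * h η y) hintB
  -- step C: per-y computation of the η-integral
  have stepC : ∀ y ∈ Set.Ioi (0:ℝ),
      (∫ η in (0:ℝ)..ω, h η y)
        = -((Complex.exp (-Complex.I * ω * y) - 1 + Complex.I * ω * y) / (y:ℂ)^2) := by
    intro y hy
    have hy0 : (y:ℂ) ≠ 0 := Complex.ofReal_ne_zero.mpr (ne_of_gt hy)
    have hc : -Complex.I * y ≠ 0 := by simp [Complex.I_ne_zero, hy0]
    have hint1 : IntervalIntegrable (fun η : ℝ => Complex.exp (-Complex.I * y * η))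
        volume 0 ω := (Complex.continuous_exp.comp (by fun_prop)).intervalIntegrable _ _
    have hint2 : IntervalIntegrable (fun _ : ℝ => (1:ℂ)) volume 0 ω :=
      intervalIntegrable_const
    rw [hh]
    rw [intervalIntegral.integral_div]
    rw [intervalIntegral.integral_sub hint1 hint2]
    rw [integral_exp_mul_complex hc]
    rw [intervalIntegral.integral_const]
    rw [Complex.ofReal_zero, mul_zero, Complex.exp_zero, sub_zero, Complex.real_smul, mul_one]
    have earg : (-Complex.I * (y:ℂ)) * (ω:ℂ) = -Complex.I * ω * y := by ring
    rw [earg]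
    have hI3 : Complex.I ^ 3 = -Complex.I := by
      rw [show (3:ℕ) = 2 + 1 from rfl, pow_succ, Complex.I_sq]; ring
    field_simp
    ring_nf
    simp only [hI3, Complex.I_sq]
    ring
  -- combine per-y: the y-integrand after swapping
  have keyC : ∀ y ∈ Set.Ioi (0:ℝ),
      (∫ η in (0:ℝ)..ω, (μ y : ℂ) * h η y)
        = -(((Complex.exp (-Complex.I * ω * y) - 1 + Complex.I * ω * y) / (y:ℂ)^2)
            * (μ y : ℂ)) := by
    intro y hy
    rw [intervalIntegral.integral_const_mul, stepC y hy]
    ring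
  -- integrability of the marginal
  have hGint : IntegrableOn (fun y => ∫ η in (0:ℝ)..ω, (μ y : ℂ) * h η y) (Set.Ioi 0) := by
    have hmarg := hintB.integral_prod_right
    rcases le_total 0 ω with hw | hw
    · refine hmarg.congr (Filter.Eventually.of_forall fun y => ?_)
      simp [Function.uncurry, intervalIntegral.integral_of_le hw, Set.uIoc_of_le hw]
    · refine hmarg.neg.congr (Filter.Eventually.of_forall fun y => ?_)
      simp [Function.uncurry, intervalIntegral.integral_of_ge hw, Set.uIoc_of_ge hw]
  have hLint : IntegrableOn (fun y : ℝ =>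
      ((Complex.exp (-Complex.I * ω * y) - 1 + Complex.I * ω * y) / (y:ℂ)^2) * (μ y : ℂ))
      (Set.Ioi 0) := by
    have hneg : IntegrableOn (fun y => -(∫ η in (0:ℝ)..ω, (μ y : ℂ) * h η y))
        (Set.Ioi 0) := hGint.neg
    refine hneg.congr_fun (fun y hy => ?_) measurableSet_Ioi
    dsimp only
    rw [keyC y hy, neg_neg]
  refine ⟨hLint, ?_⟩
  simp only [stepA]
  rw [stepB]
  rw [← MeasureTheory.integral_neg]
  refine (setIntegral_congr_fun measurableSet_Ioi (fun y hy => ?_)).symm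
  rw [keyC y hy, neg_neg]
end

section
/- Let μ : (0,∞) → ℝ be Lebesgue integrable and let q : ℝ → ℂ be a Schwartz function. Define (E₁q)(x) = ∫₀^∞ ((q(x+y) + q(x−y) − 2q(x))/y) μ(y) dy. Then E₁q is integrable on ℝ and its Fourier transform satisfies, for every ω ∈ ℝ, ∫_ℝ (E₁q)(x) e^{−iωx} dx = (∫₀^∞ ((e^{iωy} + e^{−iωy} − 2)/y) μ(y) dy) · ∫_ℝ q(x) e^{−iωx} dx. -/
open MeasureTheory

/-- L¹ bound for translation: `‖q(·+y) - q‖₁ ≤ y ‖q'‖₁`. -/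
lemma trans_L1_bound (q : SchwartzMap ℝ ℂ) {y : ℝ} (hy : 0 ≤ y) :
    ∫ x : ℝ, ‖q (x + y) - q x‖ ≤ y * ∫ x : ℝ, ‖(SchwartzMap.derivCLM ℝ ℂ q) x‖ := by
  set D : SchwartzMap ℝ ℂ := SchwartzMap.derivCLM ℝ ℂ q with hDdef
  have hDint : Integrable (fun x : ℝ => D x) volume := D.integrable (μ := volume)
  -- integrability of (t, x) ↦ ‖D (x + t)‖ on the product
  have hg : Integrable (Function.uncurry fun t x : ℝ => ‖D (x + t)‖)
      ((volume.restrict (Set.Ioc (0:ℝ) y)).prod volume) := by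
    have hmeas : AEStronglyMeasurable (Function.uncurry fun t x : ℝ => ‖D (x + t)‖)
        ((volume.restrict (Set.Ioc (0:ℝ) y)).prod volume) :=
      ((D.continuous.comp (continuous_snd.add continuous_fst)).norm).aestronglyMeasurable
    refine (integrable_prod_iff hmeas).mpr ⟨?_, ?_⟩
    · exact Filter.Eventually.of_forall fun t => (hDint.comp_add_right t).norm
    · have heq : (fun t : ℝ => ∫ x : ℝ, ‖Function.uncurry (fun t x : ℝ => ‖D (x + t)‖) (t, x)‖)
          = fun _ : ℝ => ∫ x : ℝ, ‖D x‖ := by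
        funext t
        simp only [Function.uncurry_apply_pair, norm_norm]
        exact integral_add_right_eq_self (fun x => ‖D x‖) t
      rw [heq]
      exact integrable_const _
  have hswap := integral_integral_swap (f := fun t x : ℝ => ‖D (x + t)‖) hg
  have hlhs : (∫ t in Set.Ioc (0:ℝ) y, (∫ x : ℝ, ‖D (x + t)‖))
      = y * ∫ x : ℝ, ‖D x‖ := by
    have h1 : (fun t : ℝ => ∫ x : ℝ, ‖D (x + t)‖) = fun _ : ℝ => ∫ x : ℝ, ‖D x‖ := by
      funext t
      exact integral_add_right_eq_self (fun x => ‖D x‖) t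
    rw [h1, setIntegral_const, Real.volume_real_Ioc_of_le hy, sub_zero,
      smul_eq_mul]
  have hpt : ∀ x : ℝ, ‖q (x + y) - q x‖ ≤ ∫ t in Set.Ioc (0:ℝ) y, ‖D (x + t)‖ := by
    intro x
    have hderiv : deriv (fun u : ℝ => q u) = fun t => D t := by
      funext t
      exact (SchwartzMap.derivCLM_apply (𝕜 := ℝ) q t).symm
    have hftc : (∫ t in (0:ℝ)..y, D (x + t)) = q (x + y) - q x := by
      have h1 : (∫ t in (0:ℝ)..y, D (x + t)) = ∫ t in (x + 0)..(x + y), D t :=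
        intervalIntegral.integral_comp_add_left (fun t => D t) x
      rw [h1, add_zero]
      exact intervalIntegral.integral_deriv_eq_sub' (fun u : ℝ => q u) hderiv
        (fun t _ => q.differentiable.differentiableAt)
        (D.continuous.continuousOn)
    calc ‖q (x + y) - q x‖ = ‖∫ t in (0:ℝ)..y, D (x + t)‖ := by rw [hftc]
      _ ≤ ∫ t in (0:ℝ)..y, ‖D (x + t)‖ :=
          intervalIntegral.norm_integral_le_integral_norm hy
      _ = ∫ t in Set.Ioc (0:ℝ) y, ‖D (x + t)‖ := intervalIntegral.integral_of_le hy
  have hint2 : Integrable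
      (fun x : ℝ => ∫ t in Set.Ioc (0:ℝ) y, ‖D (x + t)‖) volume := by
    have := hg.integral_prod_right
    simpa [Function.uncurry] using this
  calc ∫ x : ℝ, ‖q (x + y) - q x‖
      ≤ ∫ x : ℝ, ∫ t in Set.Ioc (0:ℝ) y, ‖D (x + t)‖ :=
        integral_mono_of_nonneg (Filter.Eventually.of_forall fun x => norm_nonneg _)
          hint2 (Filter.Eventually.of_forall hpt)
    _ = ∫ t in Set.Ioc (0:ℝ) y, (∫ x : ℝ, ‖D (x + t)‖) := hswap.symm
    _ = y * ∫ x : ℝ, ‖D x‖ := hlhs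

lemma trans_L1_bound' (q : SchwartzMap ℝ ℂ) {y : ℝ} (hy : 0 ≤ y) :
    ∫ x : ℝ, ‖q (x - y) - q x‖ ≤ y * ∫ x : ℝ, ‖(SchwartzMap.derivCLM ℝ ℂ q) x‖ := by
  have h : (∫ x : ℝ, ‖q (x - y) - q x‖) = ∫ x : ℝ, ‖q (x + y) - q x‖ := by
    rw [← integral_add_right_eq_self (fun x => ‖q (x - y) - q x‖) y]
    congr 1
    funext x
    rw [add_sub_cancel_right, norm_sub_rev]
  rw [h]
  exact trans_L1_bound q hy

theorem stmt4 (μ : ℝ → ℝ) (hμ : IntegrableOn μ (Set.Ioi 0)) (q : SchwartzMap ℝ ℂ) :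
    Integrable (fun x : ℝ =>
      ∫ y in Set.Ioi (0:ℝ), ((q (x + y) + q (x - y) - 2 * q x) / (y:ℂ)) * (μ y : ℂ)) ∧
    ∀ ω : ℝ,
      ∫ x : ℝ,
          (∫ y in Set.Ioi (0:ℝ), ((q (x + y) + q (x - y) - 2 * q x) / (y:ℂ)) * (μ y : ℂ)) *
            Complex.exp (-Complex.I * ω * x)
        = (∫ y in Set.Ioi (0:ℝ),
              ((Complex.exp (Complex.I * ω * y) + Complex.exp (-Complex.I * ω * y) - 2) / (y:ℂ)) *
                (μ y : ℂ)) *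
          ∫ x : ℝ, q x * Complex.exp (-Complex.I * ω * x) := by
  have hq : Integrable (fun x : ℝ => q x) volume := q.integrable (μ := volume)
  set η : Measure ℝ := volume.restrict (Set.Ioi (0:ℝ)) with hη
  set f : ℝ × ℝ → ℂ := fun p =>
    ((q (p.1 + p.2) + q (p.1 - p.2) - 2 * q p.1) / ((p.2 : ℝ) : ℂ)) * ((μ p.2 : ℝ) : ℂ) with hf
  have hΔ : ∀ y : ℝ, Integrable (fun x : ℝ => q (x + y) + q (x - y) - 2 * q x) volume :=
    fun y => ((hq.comp_add_right y).add (hq.comp_sub_right y)).sub (hq.const_mul 2)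
  have hsect : ∀ y : ℝ, Integrable (fun x : ℝ => f (x, y)) volume := by
    intro y
    have h := (hΔ y).mul_const (((μ y : ℝ) : ℂ) / ((y : ℝ) : ℂ))
    refine h.congr (Filter.Eventually.of_forall fun x => ?_)
    simp only [hf]
    ring
  have hmeasf : AEStronglyMeasurable f (volume.prod η) := by
    have h1 : AEMeasurable (fun p : ℝ × ℝ =>
        ((q (p.1 + p.2) + q (p.1 - p.2) - 2 * q p.1) / ((p.2 : ℝ) : ℂ))) (volume.prod η) := by
      apply AEMeasurable.div
      · exact (((q.continuous.comp (continuous_fst.add continuous_snd)).add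
          (q.continuous.comp (continuous_fst.sub continuous_snd))).sub
          ((continuous_const.mul q.continuous).comp continuous_fst)).aemeasurable
      · exact (Complex.measurable_ofReal.comp measurable_snd).aemeasurable
    have h2 : AEMeasurable (fun p : ℝ × ℝ => ((μ p.2 : ℝ) : ℂ)) (volume.prod η) :=
      Complex.measurable_ofReal.comp_aemeasurable hμ.aemeasurable.comp_snd
    exact (h1.mul h2).aestronglyMeasurable
  -- bound on the L¹-norm in x of the sections
  have hnormint : ∀ y ∈ Set.Ioi (0:ℝ), (∫ x : ℝ, ‖f (x, y)‖)
      ≤ 2 * (∫ x : ℝ, ‖(SchwartzMap.derivCLM ℝ ℂ q) x‖) * |μ y| := by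
    intro y hy
    have hy0 : (0:ℝ) < y := hy
    have hnorm : ∀ x : ℝ, ‖f (x, y)‖
        = ‖q (x + y) + q (x - y) - 2 * q x‖ * (|μ y| / y) := by
      intro x
      simp only [hf, norm_mul, norm_div, Complex.norm_real, Real.norm_eq_abs,
        abs_of_pos hy0]
      ring
    have hΔbound : (∫ x : ℝ, ‖q (x + y) + q (x - y) - 2 * q x‖)
        ≤ 2 * y * ∫ x : ℝ, ‖(SchwartzMap.derivCLM ℝ ℂ q) x‖ := by
      have hi1 : Integrable (fun x : ℝ => ‖q (x + y) - q x‖) volume :=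
        ((hq.comp_add_right y).sub hq).norm
      have hi2 : Integrable (fun x : ℝ => ‖q (x - y) - q x‖) volume :=
        ((hq.comp_sub_right y).sub hq).norm
      have hsum : (∫ x : ℝ, ‖q (x + y) + q (x - y) - 2 * q x‖)
          ≤ ∫ x : ℝ, (‖q (x + y) - q x‖ + ‖q (x - y) - q x‖) := by
        apply integral_mono (hΔ y).norm (hi1.add hi2)
        intro x
        have hx : q (x + y) + q (x - y) - 2 * q x
            = (q (x + y) - q x) + (q (x - y) - q x) := by ring
        calc ‖q (x + y) + q (x - y) - 2 * q x‖
            = ‖(q (x + y) - q x) + (q (x - y) - q x)‖ := by rw [hx]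
          _ ≤ ‖q (x + y) - q x‖ + ‖q (x - y) - q x‖ := norm_add_le _ _
      rw [integral_add hi1 hi2] at hsum
      have h1 := trans_L1_bound q hy0.le
      have h2 := trans_L1_bound' q hy0.le
      linarith
    calc (∫ x : ℝ, ‖f (x, y)‖)
        = (∫ x : ℝ, ‖q (x + y) + q (x - y) - 2 * q x‖) * (|μ y| / y) := by
          simp only [hnorm]
          exact integral_mul_const _ _
      _ ≤ (2 * y * ∫ x : ℝ, ‖(SchwartzMap.derivCLM ℝ ℂ q) x‖) * (|μ y| / y) :=
          mul_le_mul_of_nonneg_right hΔbound (div_nonneg (abs_nonneg _) hy0.le)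
      _ = 2 * (∫ x : ℝ, ‖(SchwartzMap.derivCLM ℝ ℂ q) x‖) * |μ y| := by
          field_simp
  have hnormmeas : AEStronglyMeasurable (fun y : ℝ => ∫ x : ℝ, ‖f (x, y)‖) η :=
    (hmeasf.norm.prod_swap).integral_prod_right'
  have h2' : Integrable (fun y : ℝ => ∫ x : ℝ, ‖f (x, y)‖) η := by
    refine Integrable.mono'
      (hμ.abs.const_mul (2 * ∫ x : ℝ, ‖(SchwartzMap.derivCLM ℝ ℂ q) x‖)) hnormmeas ?_
    filter_upwards [ae_restrict_mem measurableSet_Ioi] with y hy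
    rw [Real.norm_eq_abs, abs_of_nonneg (integral_nonneg fun x => norm_nonneg _)]
    exact hnormint y hy
  have hF : Integrable f (volume.prod η) :=
    (integrable_prod_iff' hmeasf).mpr ⟨Filter.Eventually.of_forall hsect, h2'⟩
  constructor
  · exact hF.integral_prod_left
  · intro ω
    have hebdd : ∀ x : ℝ, ‖Complex.exp (-Complex.I * ω * x)‖ ≤ 1 := by
      intro x
      rw [show -Complex.I * (ω:ℂ) * (x:ℂ) = ((-(ω * x) : ℝ) : ℂ) * Complex.I by
        push_cast; ring]
      rw [Complex.norm_exp_ofReal_mul_I]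
    have hecont : Continuous (fun x : ℝ => Complex.exp (-Complex.I * ω * x)) :=
      Complex.continuous_exp.comp (continuous_const.mul Complex.continuous_ofReal)
    have hG : Integrable (fun p : ℝ × ℝ => f p * Complex.exp (-Complex.I * ω * p.1))
        (volume.prod η) := by
      have h := hF.bdd_mul ((hecont.comp continuous_fst).aestronglyMeasurable)
        (Filter.Eventually.of_forall fun p => hebdd p.1)
      exact h.congr (Filter.Eventually.of_forall fun p => mul_comm _ _)
    -- Integrability of the building blocks
    have hI0 : Integrable (fun x : ℝ => q x * Complex.exp (-Complex.I * ω * x)) volume :=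
      (hq.bdd_mul hecont.aestronglyMeasurable (Filter.Eventually.of_forall hebdd)).congr
        (Filter.Eventually.of_forall fun x => mul_comm _ _)
    have hIy : ∀ y : ℝ,
        Integrable (fun x : ℝ => q (x + y) * Complex.exp (-Complex.I * ω * x)) volume :=
      fun y => ((hq.comp_add_right y).bdd_mul hecont.aestronglyMeasurable (Filter.Eventually.of_forall hebdd)).congr
        (Filter.Eventually.of_forall fun x => mul_comm _ _)
    have hIy' : ∀ y : ℝ,
        Integrable (fun x : ℝ => q (x - y) * Complex.exp (-Complex.I * ω * x)) volume :=
      fun y => ((hq.comp_sub_right y).bdd_mul hecont.aestronglyMeasurable (Filter.Eventually.of_forall hebdd)).congr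
        (Filter.Eventually.of_forall fun x => mul_comm _ _)
    -- inner integral computation
    have e1 : ∀ y : ℝ, (∫ x : ℝ, q (x + y) * Complex.exp (-Complex.I * ω * x))
        = (∫ x : ℝ, q x * Complex.exp (-Complex.I * ω * x)) * Complex.exp (Complex.I * ω * y) := by
      intro y
      have h := integral_add_right_eq_self (μ := volume)
        (fun u : ℝ => q u * Complex.exp (-Complex.I * ω * ((u - y : ℝ) : ℂ))) y
      simp only [add_sub_cancel_right] at h
      have hr : (fun u : ℝ => q u * Complex.exp (-Complex.I * ω * ((u - y : ℝ) : ℂ)))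
          = fun u : ℝ => (q u * Complex.exp (-Complex.I * ω * u)) * Complex.exp (Complex.I * ω * y) := by
        funext u
        have harg : (-Complex.I * ω * ((u - y : ℝ) : ℂ))
            = (-Complex.I * ω * u) + (Complex.I * ω * y) := by push_cast; ring
        rw [harg, Complex.exp_add]
        ring
      rw [hr, integral_mul_const] at h
      exact h
    have e2 : ∀ y : ℝ, (∫ x : ℝ, q (x - y) * Complex.exp (-Complex.I * ω * x))
        = (∫ x : ℝ, q x * Complex.exp (-Complex.I * ω * x)) * Complex.exp (-Complex.I * ω * y) := by
      intro y
      have h := integral_sub_right_eq_self (μ := volume)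
        (fun u : ℝ => q u * Complex.exp (-Complex.I * ω * ((u + y : ℝ) : ℂ))) y
      simp only [sub_add_cancel] at h
      have hr : (fun u : ℝ => q u * Complex.exp (-Complex.I * ω * ((u + y : ℝ) : ℂ)))
          = fun u : ℝ => (q u * Complex.exp (-Complex.I * ω * u)) * Complex.exp (-Complex.I * ω * y) := by
        funext u
        have harg : (-Complex.I * ω * ((u + y : ℝ) : ℂ))
            = (-Complex.I * ω * u) + (-Complex.I * ω * y) := by push_cast; ring
        rw [harg, Complex.exp_add]
        ring
      rw [hr, integral_mul_const] at h
      exact h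
    have hinner : ∀ y : ℝ, (∫ x : ℝ, f (x, y) * Complex.exp (-Complex.I * ω * x))
        = (((Complex.exp (Complex.I * ω * y) + Complex.exp (-Complex.I * ω * y) - 2) / ((y:ℝ):ℂ))
            * ((μ y : ℝ) : ℂ)) * ∫ x : ℝ, q x * Complex.exp (-Complex.I * ω * x) := by
      intro y
      calc (∫ x : ℝ, f (x, y) * Complex.exp (-Complex.I * ω * x))
          = ∫ x : ℝ, (q (x + y) * Complex.exp (-Complex.I * ω * x)
              + q (x - y) * Complex.exp (-Complex.I * ω * x)
              - 2 * (q x * Complex.exp (-Complex.I * ω * x)))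
              * (((μ y : ℝ) : ℂ) / ((y:ℝ):ℂ)) := by
            congr 1
            funext x
            simp only [hf]
            ring
        _ = (∫ x : ℝ, (q (x + y) * Complex.exp (-Complex.I * ω * x)
              + q (x - y) * Complex.exp (-Complex.I * ω * x)
              - 2 * (q x * Complex.exp (-Complex.I * ω * x))))
              * (((μ y : ℝ) : ℂ) / ((y:ℝ):ℂ)) := integral_mul_const _ _
        _ = ((∫ x : ℝ, q (x + y) * Complex.exp (-Complex.I * ω * x))
              + (∫ x : ℝ, q (x - y) * Complex.exp (-Complex.I * ω * x))
              - 2 * ∫ x : ℝ, q x * Complex.exp (-Complex.I * ω * x))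
              * (((μ y : ℝ) : ℂ) / ((y:ℝ):ℂ)) := by
            have hadd : Integrable (fun x : ℝ => q (x + y) * Complex.exp (-Complex.I * ω * x)
                + q (x - y) * Complex.exp (-Complex.I * ω * x)) volume := (hIy y).add (hIy' y)
            have hcm : Integrable (fun x : ℝ =>
                2 * (q x * Complex.exp (-Complex.I * ω * x))) volume := hI0.const_mul 2
            rw [integral_sub hadd hcm, integral_add (hIy y) (hIy' y), integral_const_mul]
        _ = (((Complex.exp (Complex.I * ω * y) + Complex.exp (-Complex.I * ω * y) - 2) / ((y:ℝ):ℂ))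
              * ((μ y : ℝ) : ℂ)) * ∫ x : ℝ, q x * Complex.exp (-Complex.I * ω * x) := by
            rw [e1 y, e2 y]
            ring
    calc (∫ x : ℝ, (∫ y, f (x, y) ∂η) * Complex.exp (-Complex.I * ω * x))
        = ∫ x : ℝ, ∫ y, f (x, y) * Complex.exp (-Complex.I * ω * x) ∂η := by
          congr 1
          funext x
          exact (integral_mul_const _ _).symm
      _ = ∫ y, (∫ x : ℝ, f (x, y) * Complex.exp (-Complex.I * ω * x)) ∂η :=
          integral_integral_swap hG
      _ = ∫ y, (((Complex.exp (Complex.I * ω * y) + Complex.exp (-Complex.I * ω * y) - 2)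
            / ((y:ℝ):ℂ)) * ((μ y : ℝ) : ℂ))
            * (∫ x : ℝ, q x * Complex.exp (-Complex.I * ω * x)) ∂η := by
          congr 1
          funext y
          exact hinner y
      _ = (∫ y, ((Complex.exp (Complex.I * ω * y) + Complex.exp (-Complex.I * ω * y) - 2)
            / ((y:ℝ):ℂ)) * ((μ y : ℝ) : ℂ) ∂η)
            * ∫ x : ℝ, q x * Complex.exp (-Complex.I * ω * x) := integral_mul_const _ _
end

section
/- Let μ : (0,∞) → ℝ be Lebesgue integrable and let q : ℝ → ℂ be a Schwartz function. Define (E₂q)(x) = ∫₀^∞ ((q(x+y) + q(x−y) − 2q(x))/y²) μ(y) dy. Then E₂q is integrable on ℝ and its Fourier transform satisfies, for every ω ∈ ℝ, ∫_ℝ (E₂q)(x) e^{−iωx} dx = (∫₀^∞ (2(cos(ωy) − 1)/y²) μ(y) dy) · ∫_ℝ q(x) e^{−iωx} dx. -/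
open MeasureTheory Set

namespace Stmt5Aux

variable (q : SchwartzMap ℝ ℂ)

lemma deriv_coe : ⇑(SchwartzMap.derivCLM ℝ ℂ q) = deriv ⇑q :=
  funext (SchwartzMap.derivCLM_apply ℝ q)

lemma q2_coe : ⇑(SchwartzMap.derivCLM ℝ ℂ (SchwartzMap.derivCLM ℝ ℂ q)) = deriv (deriv ⇑q) := by
  rw [deriv_coe, deriv_coe]

lemma hq'cont : Continuous (deriv ⇑q) := (deriv_coe q) ▸ (SchwartzMap.derivCLM ℝ ℂ q).continuous

lemma hq''cont : Continuous (deriv (deriv ⇑q)) :=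
  (q2_coe q) ▸ (SchwartzMap.derivCLM ℝ ℂ (SchwartzMap.derivCLM ℝ ℂ q)).continuous

lemma hq2int : Integrable (fun s => ‖deriv (deriv ⇑q) s‖) volume :=
  ((q2_coe q) ▸ (SchwartzMap.derivCLM ℝ ℂ (SchwartzMap.derivCLM ℝ ℂ q)).integrable (μ := volume)).norm

lemma hdq : ∀ z : ℝ, HasDerivAt (⇑q) (deriv ⇑q z) z :=
  fun z => (q.differentiable z).hasDerivAt

lemma hdq' : ∀ z : ℝ, HasDerivAt (deriv ⇑q) (deriv (deriv ⇑q) z) z := by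
  intro z
  have := ((SchwartzMap.derivCLM ℝ ℂ q).differentiable z).hasDerivAt
  rw [deriv_coe] at this
  rwa [← q2_coe, ← deriv_coe]

/-- The local average of `g` over `[x-y, x+y]`. -/
noncomputable def H (g : ℝ → ℝ) (y x : ℝ) : ℝ := ∫ s in Ioc (x - y) (x + y), g s

lemma secdiff_le {y : ℝ} (hy : 0 < y) (x : ℝ) :
    ‖q (x + y) + q (x - y) - 2 * q x‖ ≤ y * H (fun s => ‖deriv (deriv ⇑q) s‖) y x := by
  have step1 : q (x + y) + q (x - y) - 2 * q x
      = ∫ t in (0:ℝ)..y, (deriv (⇑q) (x + t) - deriv (⇑q) (x - t)) := by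
    rw [intervalIntegral.integral_eq_sub_of_hasDerivAt
      (f := fun t => q (x + t) + q (x - t)) (f' := fun t => deriv (⇑q) (x + t) - deriv (⇑q) (x - t))
      ?_ ?_]
    · simp; ring
    · intro t _
      have h1 : HasDerivAt (fun t : ℝ => q (x + t)) (deriv (⇑q) (x + t)) t :=
        (hdq q (x + t)).comp_const_add x t
      have h2 : HasDerivAt (fun t : ℝ => q (x - t)) (-(deriv (⇑q) (x - t))) t :=
        (hdq q (x - t)).comp_const_sub x t
      exact (h1.add h2).congr_deriv (by ring)
    · exact (((hq'cont q).comp (continuous_const.add continuous_id)).sub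
        ((hq'cont q).comp (continuous_const.sub continuous_id))).intervalIntegrable 0 y
  have step2 : ∀ t ∈ Icc (0:ℝ) y, ‖deriv (⇑q) (x + t) - deriv (⇑q) (x - t)‖
      ≤ H (fun s => ‖deriv (deriv ⇑q) s‖) y x := by
    intro t ht
    have heq : deriv (⇑q) (x + t) - deriv (⇑q) (x - t)
        = ∫ s in (x - t)..(x + t), deriv (deriv (⇑q)) s :=
      (intervalIntegral.integral_eq_sub_of_hasDerivAt
        (fun s _ => hdq' q s) ((hq''cont q).intervalIntegrable _ _)).symm
    rw [heq]
    calc ‖∫ s in (x - t)..(x + t), deriv (deriv (⇑q)) s‖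
        ≤ ∫ s in (x - t)..(x + t), ‖deriv (deriv (⇑q)) s‖ :=
          intervalIntegral.norm_integral_le_integral_norm (by linarith [ht.1])
      _ = ∫ s in Ioc (x - t) (x + t), ‖deriv (deriv (⇑q)) s‖ :=
          intervalIntegral.integral_of_le (by linarith [ht.1])
      _ ≤ H (fun s => ‖deriv (deriv ⇑q) s‖) y x := by
          apply setIntegral_mono_set (hq2int q).integrableOn
            (Filter.Eventually.of_forall fun s => norm_nonneg _)
          exact Filter.Eventually.of_forall
            (Ioc_subset_Ioc (by linarith [ht.2]) (by linarith [ht.2]))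
  calc ‖q (x + y) + q (x - y) - 2 * q x‖
      = ‖∫ t in (0:ℝ)..y, (deriv (⇑q) (x + t) - deriv (⇑q) (x - t))‖ := by rw [step1]
    _ ≤ ∫ t in (0:ℝ)..y, ‖deriv (⇑q) (x + t) - deriv (⇑q) (x - t)‖ :=
        intervalIntegral.norm_integral_le_integral_norm hy.le
    _ ≤ ∫ t in (0:ℝ)..y, H (fun s => ‖deriv (deriv ⇑q) s‖) y x := by
        apply intervalIntegral.integral_mono_on hy.le
          ((((hq'cont q).comp (continuous_const.add continuous_id)).sub
            ((hq'cont q).comp (continuous_const.sub continuous_id))).norm.intervalIntegrable 0 y)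
          intervalIntegrable_const step2
    _ = y * H (fun s => ‖deriv (deriv ⇑q) s‖) y x := by simp

section Hlem

variable {g : ℝ → ℝ} (hgc : Continuous g) (hgi : Integrable g volume)

lemma H_eq {y : ℝ} (hy : 0 < y) (x : ℝ) :
    H g y x = ∫ u in Ioc (-y) y, g (x + u) := by
  rw [H, ← intervalIntegral.integral_of_le (by linarith), ← intervalIntegral.integral_of_le
    (show -y ≤ y by linarith), intervalIntegral.integral_comp_add_left g x]
  congr 1 <;> ring

include hgc hgi in
lemma phi_int (y : ℝ) :
    Integrable (fun p : ℝ × ℝ => g (p.1 + p.2))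
      (volume.prod (volume.restrict (Ioc (-y) y))) := by
  have hm : AEStronglyMeasurable (fun p : ℝ × ℝ => g (p.1 + p.2))
      (volume.prod (volume.restrict (Ioc (-y) y))) :=
    (hgc.comp (continuous_fst.add continuous_snd)).aestronglyMeasurable
  rw [integrable_prod_iff' hm]
  constructor
  · exact Filter.Eventually.of_forall fun u => hgi.comp_add_right u
  · have : (fun u : ℝ => ∫ x : ℝ, ‖g (x + u)‖) = fun _ => ∫ x : ℝ, ‖g x‖ := by
      funext u
      exact integral_add_right_eq_self (fun x => ‖g x‖) u
    rw [this]
    exact integrableOn_const (by simp [Real.volume_Ioc])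

include hgc hgi in
lemma H_integrable {y : ℝ} (hy : 0 < y) : Integrable (H g y) volume := by
  have := (phi_int hgc hgi y).integral_prod_left
  refine this.congr (Filter.Eventually.of_forall fun x => ?_)
  exact (H_eq hy x).symm

include hgc hgi in
lemma H_integral {y : ℝ} (hy : 0 < y) :
    ∫ x, H g y x = (2 * y) * ∫ s, g s := by
  have hswap := integral_integral_swap (f := fun x u => g (x + u))
    (μ := volume) (ν := volume.restrict (Ioc (-y) y)) (phi_int hgc hgi y)
  calc ∫ x, H g y x = ∫ x, ∫ u in Ioc (-y) y, g (x + u) := by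
        congr 1; funext x; exact H_eq hy x
    _ = ∫ u in Ioc (-y) y, ∫ x, g (x + u) := hswap
    _ = ∫ u in Ioc (-y) y, ∫ s, g s := by
        congr 1; funext u; exact integral_add_right_eq_self g u
    _ = (2 * y) * ∫ s, g s := by
        rw [setIntegral_const, Real.volume_real_Ioc_of_le (by linarith), smul_eq_mul]
        ring_nf

end Hlem

variable (μ : ℝ → ℝ)

noncomputable def P (x y : ℝ) : ℂ :=
  ((q (x + y) + q (x - y) - 2 * q x) / (y : ℂ)^2) * (μ y : ℂ)

noncomputable def M : Measure (ℝ × ℝ) := (volume : Measure ℝ).prod (volume.restrict (Ioi 0))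

variable (hμ : IntegrableOn μ (Set.Ioi 0))

lemma hnum_cont : Continuous fun p : ℝ × ℝ => q (p.1 + p.2) + q (p.1 - p.2) - 2 * q p.1 :=
  ((q.continuous.comp (continuous_fst.add continuous_snd)).add
    (q.continuous.comp (continuous_fst.sub continuous_snd))).sub
    (continuous_const.mul (q.continuous.comp continuous_fst))

include hμ in
lemma hAESM : AEStronglyMeasurable (fun p : ℝ × ℝ => P q μ p.1 p.2) M := by
  have h1 := (hnum_cont q).aestronglyMeasurable (μ := M)
  have h2 : Measurable fun p : ℝ × ℝ => (((p.2 : ℂ))^2)⁻¹ :=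
    ((Complex.measurable_ofReal.comp measurable_snd).pow_const 2).inv
  have h3 : AEStronglyMeasurable (fun p : ℝ × ℝ => ((μ p.2 : ℝ) : ℂ)) M :=
    Complex.continuous_ofReal.comp_aestronglyMeasurable hμ.aestronglyMeasurable.comp_snd
  have := (h1.mul h2.aestronglyMeasurable).mul h3
  refine this.congr (Filter.Eventually.of_forall fun p => ?_)
  simp [P, div_eq_mul_inv]

lemma hslice (y : ℝ) : Integrable (fun x => P q μ x y) volume := by
  have base : Integrable (fun x : ℝ => q (x + y) + q (x - y) - 2 * q x) volume :=
    ((q.integrable.comp_add_right y).add (q.integrable.comp_sub_right y)).sub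
      (q.integrable.const_mul 2)
  refine (base.mul_const (((y : ℂ))^2)⁻¹ |>.mul_const ((μ y : ℝ) : ℂ)).congr
    (Filter.Eventually.of_forall fun x => ?_)
  simp [P, div_eq_mul_inv]

lemma norm_P_le {y : ℝ} (hy : 0 < y) (x : ℝ) :
    ‖P q μ x y‖ ≤ H (fun s => ‖deriv (deriv ⇑q) s‖) y x * (|μ y| / y) := by
  have hH0 : 0 ≤ H (fun s => ‖deriv (deriv ⇑q) s‖) y x :=
    integral_nonneg fun s => norm_nonneg _
  have hnorm : ‖P q μ x y‖ = ‖q (x + y) + q (x - y) - 2 * q x‖ / y^2 * |μ y| := by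
    rw [P, norm_mul, norm_div, norm_pow, Complex.norm_real, Complex.norm_real,
      Real.norm_eq_abs, Real.norm_eq_abs, abs_of_pos hy]
  rw [hnorm]
  have h1 : ‖q (x + y) + q (x - y) - 2 * q x‖ / y^2 * |μ y|
      ≤ (y * H (fun s => ‖deriv (deriv ⇑q) s‖) y x) / y^2 * |μ y| := by
    gcongr
    exact secdiff_le q hy x
  refine h1.trans (le_of_eq ?_)
  field_simp

include hμ in
lemma xint_le {y : ℝ} (hy : 0 < y) (hμy : y ∈ Ioi (0:ℝ)) :
    ∫ x, ‖P q μ x y‖ ≤ (2 * ∫ s, ‖deriv (deriv ⇑q) s‖) * |μ y| := by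
  have hgc := (hq''cont q).norm
  have hgi := hq2int q
  calc ∫ x, ‖P q μ x y‖
      ≤ ∫ x, H (fun s => ‖deriv (deriv ⇑q) s‖) y x * (|μ y| / y) := by
        apply integral_mono_of_nonneg (Filter.Eventually.of_forall fun x => norm_nonneg _)
          ((H_integrable hgc hgi hy).mul_const _)
          (Filter.Eventually.of_forall fun x => norm_P_le q μ hy x)
    _ = (∫ x, H (fun s => ‖deriv (deriv ⇑q) s‖) y x) * (|μ y| / y) :=
        integral_mul_const _ _
    _ = ((2 * y) * ∫ s, ‖deriv (deriv ⇑q) s‖) * (|μ y| / y) := by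
        rw [H_integral hgc hgi hy]
    _ = (2 * ∫ s, ‖deriv (deriv ⇑q) s‖) * |μ y| := by
        field_simp

include hμ in
lemma hPint : Integrable (fun p : ℝ × ℝ => P q μ p.1 p.2) M := by
  rw [show M = (volume : Measure ℝ).prod (volume.restrict (Ioi 0)) from rfl,
    integrable_prod_iff' (hAESM q μ hμ)]
  refine ⟨Filter.Eventually.of_forall fun y => hslice q μ y, ?_⟩
  refine Integrable.mono' (hμ.norm.const_mul (2 * ∫ s, ‖deriv (deriv ⇑q) s‖))
    ?_ ?_
  · exact ((hAESM q μ hμ).norm.prod_swap).integral_prod_right'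
  · filter_upwards [ae_restrict_mem measurableSet_Ioi] with y hy
    rw [Real.norm_of_nonneg (integral_nonneg fun x => norm_nonneg _)]
    exact xint_le q μ hμ hy hy


lemma norm_e (ω x : ℝ) : ‖Complex.exp (-Complex.I * ω * x)‖ = 1 := by
  rw [Complex.norm_exp]
  simp

lemma int_mul_e {f : ℝ → ℂ} (hf : Integrable f volume) (ω : ℝ) :
    Integrable (fun x => f x * Complex.exp (-Complex.I * ω * x)) volume := by
  have hc : Continuous fun x : ℝ => Complex.exp (-Complex.I * ω * x) :=
    Complex.continuous_exp.comp (continuous_const.mul Complex.continuous_ofReal)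
  have := hf.bdd_mul hc.aestronglyMeasurable (Filter.Eventually.of_forall fun x => le_of_eq (norm_e ω x))
  exact this.congr (Filter.Eventually.of_forall fun x => mul_comm _ _)

lemma inner_eval (ω : ℝ) {y : ℝ} (hy : 0 < y) :
    ∫ x : ℝ, P q μ x y * Complex.exp (-Complex.I * ω * x)
      = ((2 * (Real.cos (ω * y) - 1) / y^2 * μ y : ℝ) : ℂ) *
        ∫ x : ℝ, q x * Complex.exp (-Complex.I * ω * x) := by
  set e : ℝ → ℂ := fun x => Complex.exp (-Complex.I * ω * x) with he
  set Qhat : ℂ := ∫ x : ℝ, q x * e x with hQhat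
  have hy' : (y : ℂ) ≠ 0 := by exact_mod_cast hy.ne'
  have hi1 : Integrable (fun x => q (x + y) * e x) volume :=
    int_mul_e (q.integrable.comp_add_right y) ω
  have hi2 : Integrable (fun x => q (x - y) * e x) volume :=
    int_mul_e (q.integrable.comp_sub_right y) ω
  have hi3 : Integrable (fun x => (q x : ℂ) * e x) volume := int_mul_e q.integrable ω
  have hA : ∫ x : ℝ, q (x + y) * e x = Qhat * Complex.exp ((ω * y : ℂ) * Complex.I) := by
    have key := integral_add_right_eq_self (μ := volume)
      (fun x : ℝ => q x * e x * Complex.exp ((ω * y : ℂ) * Complex.I)) y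
    calc ∫ x : ℝ, q (x + y) * e x
        = ∫ x : ℝ, q (x + y) * e (x + y) * Complex.exp ((ω * y : ℂ) * Complex.I) := by
          refine integral_congr_ae (Filter.Eventually.of_forall fun x => ?_)
          rw [he]
          simp only [mul_assoc, ← Complex.exp_add]
          congr 2
          push_cast
          ring
      _ = ∫ x : ℝ, q x * e x * Complex.exp ((ω * y : ℂ) * Complex.I) := key
      _ = Qhat * Complex.exp ((ω * y : ℂ) * Complex.I) := integral_mul_const _ _
  have hB : ∫ x : ℝ, q (x - y) * e x = Qhat * Complex.exp (-(ω * y : ℂ) * Complex.I) := by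
    have key := integral_sub_right_eq_self (μ := volume)
      (fun x : ℝ => q x * e x * Complex.exp (-(ω * y : ℂ) * Complex.I)) y
    calc ∫ x : ℝ, q (x - y) * e x
        = ∫ x : ℝ, q (x - y) * e (x - y) * Complex.exp (-(ω * y : ℂ) * Complex.I) := by
          refine integral_congr_ae (Filter.Eventually.of_forall fun x => ?_)
          rw [he]
          simp only [mul_assoc, ← Complex.exp_add]
          congr 2
          push_cast
          ring
      _ = ∫ x : ℝ, q x * e x * Complex.exp (-(ω * y : ℂ) * Complex.I) := key
      _ = Qhat * Complex.exp (-(ω * y : ℂ) * Complex.I) := integral_mul_const _ _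
  have hsplit : ∫ x : ℝ, (q (x + y) + q (x - y) - 2 * q x) * e x
      = Qhat * (Complex.exp ((ω * y : ℂ) * Complex.I)
          + Complex.exp (-(ω * y : ℂ) * Complex.I) - 2) := by
    have : (fun x : ℝ => (q (x + y) + q (x - y) - 2 * q x) * e x)
        = fun x : ℝ => q (x + y) * e x + q (x - y) * e x - (2 : ℂ) * (q x * e x) := by
      funext x; ring
    have hi12 : Integrable (fun x : ℝ => q (x + y) * e x + q (x - y) * e x) volume :=
      hi1.add hi2
    have hi32 : Integrable (fun x : ℝ => (2 : ℂ) * (q x * e x)) volume := hi3.const_mul 2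
    rw [this, integral_sub hi12 hi32, integral_add hi1 hi2,
      integral_const_mul, hA, hB, ← hQhat]
    ring
  calc ∫ x : ℝ, P q μ x y * e x
      = ∫ x : ℝ, ((q (x + y) + q (x - y) - 2 * q x) * e x) * ((μ y : ℂ) / (y : ℂ)^2) := by
        refine integral_congr_ae (Filter.Eventually.of_forall fun x => ?_)
        simp only [P]; ring
    _ = (∫ x : ℝ, (q (x + y) + q (x - y) - 2 * q x) * e x) * ((μ y : ℂ) / (y : ℂ)^2) :=
        integral_mul_const _ _
    _ = (Qhat * (Complex.exp ((ω * y : ℂ) * Complex.I)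
          + Complex.exp (-(ω * y : ℂ) * Complex.I) - 2)) * ((μ y : ℂ) / (y : ℂ)^2) := by
        rw [hsplit]
    _ = ((2 * (Real.cos (ω * y) - 1) / y^2 * μ y : ℝ) : ℂ) * Qhat := by
        push_cast
        rw [show Complex.exp ((ω * y : ℂ) * Complex.I) + Complex.exp (-(ω * y : ℂ) * Complex.I)
            = 2 * Complex.cos ((ω : ℂ) * (y : ℂ)) by
          rw [← Complex.two_cos]]
        field_simp

end Stmt5Aux

open Stmt5Aux in
theorem stmt5 (μ : ℝ → ℝ) (hμ : IntegrableOn μ (Set.Ioi 0)) (q : SchwartzMap ℝ ℂ) :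
    Integrable (fun x : ℝ =>
      ∫ y in Set.Ioi (0:ℝ), ((q (x + y) + q (x - y) - 2 * q x) / (y:ℂ)^2) * (μ y : ℂ)) ∧
    ∀ ω : ℝ,
      ∫ x : ℝ,
          (∫ y in Set.Ioi (0:ℝ), ((q (x + y) + q (x - y) - 2 * q x) / (y:ℂ)^2) * (μ y : ℂ)) *
            Complex.exp (-Complex.I * ω * x)
        = ((∫ y in Set.Ioi (0:ℝ), (2 * (Real.cos (ω * y) - 1) / y^2) * μ y : ℝ) : ℂ) *
          ∫ x : ℝ, q x * Complex.exp (-Complex.I * ω * x) := by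
  have hP := hPint q μ hμ
  constructor
  · exact hP.integral_prod_left
  · intro ω
    have hPω : Integrable (fun p : ℝ × ℝ => P q μ p.1 p.2
        * Complex.exp (-Complex.I * ω * p.1)) M := by
      have hc : Continuous fun p : ℝ × ℝ => Complex.exp (-Complex.I * ω * p.1) :=
        Complex.continuous_exp.comp
          (continuous_const.mul (Complex.continuous_ofReal.comp continuous_fst))
      have := hP.bdd_mul hc.aestronglyMeasurable (Filter.Eventually.of_forall fun p => le_of_eq (norm_e ω p.1))
      exact this.congr (Filter.Eventually.of_forall fun p => mul_comm _ _)
    calc ∫ x : ℝ,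
          (∫ y in Set.Ioi (0:ℝ), ((q (x + y) + q (x - y) - 2 * q x) / (y:ℂ)^2) * (μ y : ℂ)) *
            Complex.exp (-Complex.I * ω * x)
        = ∫ x : ℝ, ∫ y in Set.Ioi (0:ℝ),
            P q μ x y * Complex.exp (-Complex.I * ω * x) := by
          refine integral_congr_ae (Filter.Eventually.of_forall fun x => ?_)
          exact (integral_mul_const _ _).symm
      _ = ∫ y in Set.Ioi (0:ℝ), ∫ x : ℝ,
            P q μ x y * Complex.exp (-Complex.I * ω * x) :=
          integral_integral_swap hPω
      _ = ∫ y in Set.Ioi (0:ℝ),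
            ((2 * (Real.cos (ω * y) - 1) / y^2 * μ y : ℝ) : ℂ) *
              ∫ x : ℝ, q x * Complex.exp (-Complex.I * ω * x) := by
          refine setIntegral_congr_fun measurableSet_Ioi fun y hy => ?_
          exact inner_eval q μ ω hy
      _ = ((∫ y in Set.Ioi (0:ℝ), (2 * (Real.cos (ω * y) - 1) / y^2) * μ y : ℝ) : ℂ) *
          ∫ x : ℝ, q x * Complex.exp (-Complex.I * ω * x) := by
          have hcast : (∫ y in Set.Ioi (0:ℝ), ((2 * (Real.cos (ω * y) - 1) / y^2 * μ y : ℝ) : ℂ))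
              = ((∫ y in Set.Ioi (0:ℝ), (2 * (Real.cos (ω * y) - 1) / y^2) * μ y : ℝ) : ℂ) :=
            integral_ofReal
          rw [integral_mul_const, hcast]
end

section
/- Let α > 0 and β > 0, and define φ(t) = t / (1 − exp(−2t − α(1 − e^{−t}) − β(e^{t} − 1))) for t ≠ 0. Then: (i) φ(t) > 0 for every real t ≠ 0; (ii) φ(t) − t → 0 as t → +∞; (iii) φ(t) → 0 as t → −∞. -/
theorem stmt7 (α β : ℝ) (hα : 0 < α) (hβ : 0 < β)
    (φ : ℝ → ℝ)
    (hφ : ∀ t : ℝ, t ≠ 0 →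
      φ t = t / (1 - Real.exp (-2*t - α*(1 - Real.exp (-t)) - β*(Real.exp t - 1)))) :
    (∀ t : ℝ, t ≠ 0 → 0 < φ t) ∧
    Filter.Tendsto (fun t : ℝ => φ t - t) Filter.atTop (nhds 0) ∧
    Filter.Tendsto φ Filter.atBot (nhds 0) := by
  set arg : ℝ → ℝ := fun t => -2*t - α*(1 - Real.exp (-t)) - β*(Real.exp t - 1) with harg
  -- arg t ≤ -2t for t ≥ 0 and arg t ≥ -2t for t ≤ 0
  have hub : ∀ t : ℝ, 0 ≤ t → arg t ≤ -2*t := by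
    intro t ht
    have h1 : Real.exp (-t) ≤ 1 := Real.exp_le_one_iff.mpr (by linarith)
    have h2 : 1 ≤ Real.exp t := Real.one_le_exp_iff.mpr ht
    simp only [harg]
    nlinarith
  have hlb : ∀ t : ℝ, t ≤ 0 → -2*t ≤ arg t := by
    intro t ht
    have h1 : 1 ≤ Real.exp (-t) := Real.one_le_exp_iff.mpr (by linarith)
    have h2 : Real.exp t ≤ 1 := Real.exp_le_one_iff.mpr ht
    simp only [harg]
    nlinarith
  have hpos : ∀ t : ℝ, t ≠ 0 → 0 < φ t := by
    intro t ht
    rw [hφ t ht]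
    rcases ht.lt_or_gt with h | h
    · have hE : 1 < Real.exp (arg t) := by
        rw [Real.one_lt_exp_iff]
        have := hlb t h.le
        linarith
      exact div_pos_of_neg_of_neg h (by simpa [harg] using (by linarith : 1 - Real.exp (arg t) < 0))
    · have hE : Real.exp (arg t) < 1 := by
        rw [Real.exp_lt_one_iff]
        have := hub t h.le
        linarith
      exact div_pos h (by simpa [harg] using (by linarith : 0 < 1 - Real.exp (arg t)))
  refine ⟨hpos, ?_, ?_⟩
  · -- atTop : φ t - t → 0
    have key : Filter.Tendsto (fun s : ℝ => 2*s*Real.exp (-(2*s))) Filter.atTop (nhds 0) := by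
      have h2 : Filter.Tendsto (fun s : ℝ => 2*s) Filter.atTop Filter.atTop :=
        Filter.Tendsto.const_mul_atTop two_pos Filter.tendsto_id
      have := (Real.tendsto_pow_mul_exp_neg_atTop_nhds_zero 1).comp h2
      simpa [Function.comp_def, pow_one] using this
    apply squeeze_zero' ?_ ?_ key
    · filter_upwards [Filter.eventually_gt_atTop (0:ℝ)] with t ht
      have hE0 : 0 < Real.exp (arg t) := Real.exp_pos _
      have hE : Real.exp (arg t) < 1 := by
        rw [Real.exp_lt_one_iff]; have := hub t ht.le; linarith
      rw [hφ t ht.ne']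
      have : t ≤ t / (1 - Real.exp (arg t)) := by
        rw [le_div_iff₀ (by linarith)]
        nlinarith
      simpa [harg] using (by linarith : 0 ≤ t / (1 - Real.exp (arg t)) - t)
    · filter_upwards [Filter.eventually_ge_atTop (1:ℝ)] with t ht
      have ht0 : (0:ℝ) < t := by linarith
      have hE0 : 0 < Real.exp (arg t) := Real.exp_pos _
      have hEe : Real.exp (arg t) ≤ Real.exp (-(2*t)) :=
        Real.exp_le_exp.mpr (by have := hub t ht0.le; linarith)
      have hhalf : Real.exp (-(2*t)) ≤ 1/2 := by
        have h1 : Real.exp (-(2*t)) ≤ Real.exp (-2) :=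
          Real.exp_le_exp.mpr (by linarith)
        have h2 : Real.exp (-2) = (Real.exp 2)⁻¹ := by
          rw [← Real.exp_neg]
        have h3 : (2:ℝ) ≤ Real.exp 2 := by
          nlinarith [Real.add_one_le_exp (2:ℝ)]
        rw [h2] at h1
        have : (Real.exp 2)⁻¹ ≤ 1/2 := by
          rw [inv_le_comm₀ (by linarith) (by norm_num)]; linarith
        linarith
      have hD : 1/2 ≤ 1 - Real.exp (arg t) := by linarith
      have hD0 : 0 < 1 - Real.exp (arg t) := by linarith
      rw [hφ t ht0.ne']
      have heq : t / (1 - Real.exp (arg t)) - t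
          = t * Real.exp (arg t) / (1 - Real.exp (arg t)) := by
        field_simp
        ring
      have hcalc : t / (1 - Real.exp (arg t)) - t ≤ 2*t*Real.exp (-(2*t)) := by
        rw [heq, div_le_iff₀ hD0]
        nlinarith [mul_le_mul_of_nonneg_left hEe ht0.le,
          mul_le_mul_of_nonneg_left hD (by positivity : (0:ℝ) ≤ 2*t*Real.exp (-(2*t)))]
      simpa [harg] using hcalc
  · -- atBot : φ t → 0
    have key : Filter.Tendsto (fun t : ℝ => -2*t*Real.exp (2*t)) Filter.atBot (nhds 0) := by
      have h2 : Filter.Tendsto (fun s : ℝ => 2*s) Filter.atBot Filter.atBot := by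
        exact Filter.Tendsto.const_mul_atBot two_pos Filter.tendsto_id
      have h3 : Filter.Tendsto (fun t : ℝ => -(2*t)) Filter.atBot Filter.atTop :=
        Filter.tendsto_neg_atBot_atTop.comp h2
      have h4 := (Real.tendsto_pow_mul_exp_neg_atTop_nhds_zero 1).comp h3
      refine h4.congr fun t => ?_
      simp [Function.comp, pow_one, neg_neg]
    apply squeeze_zero' ?_ ?_ key
    · filter_upwards [Filter.eventually_lt_atBot (0:ℝ)] with t ht
      exact (hpos t ht.ne).le
    · filter_upwards [Filter.eventually_le_atBot (-1:ℝ)] with t ht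
      have ht0 : t < 0 := by linarith
      have hEe : Real.exp (-(2*t)) ≤ Real.exp (arg t) :=
        Real.exp_le_exp.mpr (by have := hlb t ht0.le; linarith)
      have h3 : (3:ℝ) ≤ Real.exp (-(2*t)) := by
        have h1 : Real.exp 2 ≤ Real.exp (-(2*t)) := Real.exp_le_exp.mpr (by linarith)
        nlinarith [Real.add_one_le_exp (2:ℝ)]
      have hD : 1 - Real.exp (arg t) ≤ -2 := by linarith
      have hu0 : (0:ℝ) < Real.exp (2*t) := Real.exp_pos _
      have hu : Real.exp (2*t) ≤ 1/2 := by
        have : Real.exp (2*t) * Real.exp (-(2*t)) = 1 := by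
          rw [← Real.exp_add]; ring_nf; exact Real.exp_zero
        nlinarith
      have huv : 1 ≤ Real.exp (2*t) * Real.exp (arg t) := by
        have h1 : Real.exp (2*t) * Real.exp (-(2*t)) = 1 := by
          rw [← Real.exp_add]; ring_nf; exact Real.exp_zero
        nlinarith
      rw [hφ t ht0.ne]
      have hcalc : t / (1 - Real.exp (arg t)) ≤ -2*t*Real.exp (2*t) := by
        rw [div_le_iff_of_neg (by linarith : 1 - Real.exp (arg t) < 0)]
        nlinarith [mul_pos hu0 (Real.exp_pos (arg t))]
      simpa [harg] using hcalc
end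

section
/- Let N' ≥ 1 and ℓ be integers with 2 ≤ ℓ ≤ N', and let f : ℤ → ℂ and G : ℤ → ℂ be arbitrary functions. Then Σ_{m=0}^{ℓ−1} Σ_{k=m−N'+1}^{m+N'} f(k)·(G(m+1−k) − G(m−k)) = Σ_{k=−N'+1}^{N'} f(ℓ−k)·G(k) − Σ_{k=−N'+1}^{N'} f(k)·G(−k) − G(−N')·Σ_{k=N'+1}^{N'+ℓ−1} f(k) + G(N')·Σ_{k=−N'+1}^{−N'+ℓ−1} f(k). -/
open Finset
private lemma sum_Icc_bot (a b : ℤ) (h : a ≤ b) (g : ℤ → ℂ) :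
    ∑ k ∈ Icc a b, g k = g a + ∑ k ∈ Icc (a+1) b, g k := by
  rw [Finset.Icc_eq_cons_Ioc h, Finset.sum_cons,
    show Ioc a b = Icc (a+1) b by ext x; simp [Int.add_one_le_iff]]

private lemma sum_Icc_top (a b : ℤ) (h : a ≤ b) (g : ℤ → ℂ) :
    ∑ k ∈ Icc a b, g k = (∑ k ∈ Icc a (b-1), g k) + g b := by
  rw [Finset.Icc_eq_cons_Ico h, Finset.sum_cons,
    show Ico a b = Icc a (b-1) by ext x; simp]
  ring

private lemma sum_reflect (a b c : ℤ) (g : ℤ → ℂ) :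
    ∑ k ∈ Icc a b, g k = ∑ j ∈ Icc (c-b) (c-a), g (c-j) := by
  refine Finset.sum_nbij' (i := fun k => c - k) (j := fun j => c - j) ?_ ?_ ?_ ?_ ?_
  all_goals intro x hx; simp_all [Finset.mem_Icc]; try omega

private lemma inner_eq (N' : ℤ) (hN : 1 ≤ N') (f G : ℤ → ℂ) (m : ℤ) :
    ∑ k ∈ Icc (m-N'+1) (m+N'), f k * (G (m+1-k) - G (m-k))
      = (∑ k ∈ Icc (-N'+1) N', f (m+1-k) * G k)
        - (∑ k ∈ Icc (-N'+1) N', f (m-k) * G k)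
        - G (-N') * f (m+N') + G N' * f (m-N') := by
  have h1 : ∑ k ∈ Icc (m-N'+1) (m+N'), f k * G (m+1-k)
      = ∑ k ∈ Icc (-N'+1) N', f (m+1-k) * G k := by
    rw [sum_reflect (m-N'+1) (m+N') (m+1)]
    apply Finset.sum_congr (by congr 1 <;> ring)
    intro x hx
    rw [show m+1 - (m+1-x) = x from by ring]
  have h2a : ∑ k ∈ Icc (m-N'+1) (m+N'), f k * G (m-k)
      = f (m+N') * G (-N') + ∑ k ∈ Icc (-N'+1) (N'-1), f (m-k) * G k := by
    rw [sum_reflect (m-N'+1) (m+N') m,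
      show m - (m+N') = -N' from by ring, show m - (m-N'+1) = N'-1 from by ring,
      sum_Icc_bot (-N') (N'-1) (by omega)]
    rw [show m - -N' = m+N' from by ring, show m - (m+N') = -N' from by ring]
    congr 1
    apply Finset.sum_congr rfl
    intro x hx
    rw [show m - (m-x) = x from by ring]
  have h2b := sum_Icc_top (-N'+1) N' (by omega) (fun k => f (m-k) * G k)
  simp only [mul_sub, Finset.sum_sub_distrib, h1, h2a, h2b]
  ring

theorem stmt10 (N' ℓ : ℤ) (hN : 1 ≤ N') (hℓ : 2 ≤ ℓ) (hℓN : ℓ ≤ N') (f G : ℤ → ℂ) :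
    ∑ m ∈ Finset.Icc (0:ℤ) (ℓ-1), ∑ k ∈ Finset.Icc (m-N'+1) (m+N'),
        f k * (G (m+1-k) - G (m-k))
      = (∑ k ∈ Finset.Icc (-N'+1) N', f (ℓ-k) * G k)
        - (∑ k ∈ Finset.Icc (-N'+1) N', f k * G (-k))
        - G (-N') * (∑ k ∈ Finset.Icc (N'+1) (N'+ℓ-1), f k)
        + G N' * (∑ k ∈ Finset.Icc (-N'+1) (-N'+ℓ-1), f k) := by
  have e1 : ∑ k ∈ Icc (-N'+1) N', f k * G (-k)
      = (∑ k ∈ Icc (-N'+1) N', f (-k) * G k) + G (-N') * f N' - G N' * f (-N') := by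
    rw [sum_reflect (-N'+1) N' 0, show (0:ℤ) - N' = -N' from by ring,
      show (0:ℤ) - (-N'+1) = N'-1 from by ring]
    have : ∀ k : ℤ, f (0-k) * G (-(0-k)) = f (-k) * G k := by
      intro k; rw [show (0:ℤ)-k = -k from by ring, neg_neg]
    simp only [this]
    rw [sum_Icc_bot (-N') (N'-1) (by omega), sum_Icc_top (-N'+1) N' (by omega)]
    rw [show -N'+1 = -N'+1 from rfl]
    ring_nf
  have main : ∀ L : ℤ, 1 ≤ L →
      ∑ m ∈ Finset.Icc (0:ℤ) (L-1), ∑ k ∈ Finset.Icc (m-N'+1) (m+N'),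
          f k * (G (m+1-k) - G (m-k))
        = (∑ k ∈ Finset.Icc (-N'+1) N', f (L-k) * G k)
          - (∑ k ∈ Finset.Icc (-N'+1) N', f k * G (-k))
          - G (-N') * (∑ k ∈ Finset.Icc (N'+1) (N'+L-1), f k)
          + G N' * (∑ k ∈ Finset.Icc (-N'+1) (-N'+L-1), f k) := by
    refine Int.le_induction (motive := fun L _ =>
      ∑ m ∈ Finset.Icc (0:ℤ) (L-1), ∑ k ∈ Finset.Icc (m-N'+1) (m+N'),
          f k * (G (m+1-k) - G (m-k))
        = (∑ k ∈ Finset.Icc (-N'+1) N', f (L-k) * G k)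
          - (∑ k ∈ Finset.Icc (-N'+1) N', f k * G (-k))
          - G (-N') * (∑ k ∈ Finset.Icc (N'+1) (N'+L-1), f k)
          + G N' * (∑ k ∈ Finset.Icc (-N'+1) (-N'+L-1), f k)) ?_ ?_
    · beta_reduce
      rw [show (1:ℤ)-1 = 0 from by ring]
      rw [show Icc (0:ℤ) 0 = {0} from rfl, Finset.sum_singleton, inner_eq N' hN f G 0]
      rw [show Icc (N'+1) (N'+1-1) = ∅ from Finset.Icc_eq_empty (by omega)]
      rw [show Icc (-N'+1) (-N'+1-1) = ∅ from Finset.Icc_eq_empty (by omega)]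
      simp only [Finset.sum_empty, e1]
      have : ∀ k : ℤ, f (0+1-k) * G k = f (1-k) * G k := by
        intro k; rw [show (0:ℤ)+1-k = 1-k from by ring]
      simp only [this, show (0:ℤ)+N' = N' from by ring, show (0:ℤ)-N' = -N' from by ring]
      have : ∀ k : ℤ, f (0-k) * G k = f (-k) * G k := by
        intro k; rw [show (0:ℤ)-k = -k from by ring]
      simp only [this]
      ring
    · intro L hL ih
      beta_reduce at ih ⊢
      rw [show L+1-1 = L from by ring, sum_Icc_top 0 L (by omega), ih,
        inner_eq N' hN f G L]
      rw [show N'+(L+1)-1 = N'+L from by ring, sum_Icc_top (N'+1) (N'+L) (by omega) f]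
      rw [show -N'+(L+1)-1 = -N'+L from by ring, sum_Icc_top (-N'+1) (-N'+L) (by omega) f]
      rw [show N'+L-1 = N'+L-1 from rfl, show L+N' = N'+L from by ring,
        show L-N' = -N'+L from by ring]
      ring
  exact main ℓ (by omega)
end

section
/- Let d > 0 and let f : ℂ → ℂ be analytic and bounded on the closed strip 𝒟_d = { z ∈ ℂ : |Im z| ≤ d }. For h̃ > 0, r > 0 and a positive integer N', define the truncated sinc-Gauss approximation 𝒯_{N',h̃,r}f(t) = Σ_{k=⌊t/h̃⌋−N'+1}^{⌊t/h̃⌋+N'} f(k h̃)·sinc(t/h̃ − k)·exp(−(t/h̃ − k)²/(2r²)) and the full series 𝒢_{h̃,r}f(t) = Σ_{k∈ℤ} f(k h̃)·sinc(t/h̃ − k)·exp(−(t/h̃ − k)²/(2r²)), where sinc(x) = sin(πx)/(πx) for x ≠ 0 and sinc(0) = 1. Then there exist a constant C' > 0 and an integer N₀, independent of N', h̃ and r, such that for every r > 0, every h̃ > 0 and every integer N' ≥ N₀, sup_{t∈ℝ} |𝒢_{h̃,r}f(t) − 𝒯_{N',h̃,r}f(t)| ≤ C' · (r² e^{3/(2r²)}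 / N'²) · exp(−N'²/(2r²)). -/
set_option maxHeartbeats 1000000

noncomputable def sincg (x : ℝ) : ℝ :=
  if x = 0 then 1 else Real.sin (Real.pi * x) / (Real.pi * x)

open Real

lemma sincg_neg (x : ℝ) : sincg (-x) = sincg x := by
  unfold sincg
  rcases eq_or_ne x 0 with rfl | hx
  · simp
  · rw [if_neg (by simpa using hx), if_neg hx, mul_neg, Real.sin_neg, neg_div_neg_eq]

lemma key_ineq {a θ : ℝ} (ha : 0 < a) (h1 : θ ≤ 1) :
    a * (θ * Real.exp (-(a * θ))) ≤ 1 - Real.exp (-a) := by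
  have h2 : a * θ + 1 ≤ Real.exp (a * θ) := Real.add_one_le_exp _
  have h3 : Real.exp (-(a*θ)) = (Real.exp (a*θ))⁻¹ := Real.exp_neg _
  have h4 : Real.exp (-a) ≤ Real.exp (-(a*θ)) := by
    apply Real.exp_le_exp.2; nlinarith
  have h5 : 0 < Real.exp (a*θ) := Real.exp_pos _
  have h6 : Real.exp (a*θ) * (Real.exp (a*θ))⁻¹ = 1 := mul_inv_cancel₀ (ne_of_gt h5)
  have : a * θ * Real.exp (-(a*θ)) ≤ 1 - Real.exp (-(a*θ)) := by
    rw [h3]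
    nlinarith [mul_le_mul_of_nonneg_right h2 (le_of_lt (inv_pos.2 h5))]
  nlinarith

lemma term_bd (r : ℝ) (hr : 0 < r) (N : ℕ) (hN : 1 ≤ N) (θ : ℝ) (h0 : 0 ≤ θ)
    (j : ℕ) :
    |sincg (θ + ((N : ℝ) + j))| * Real.exp (-((θ + ((N : ℝ) + j))^2 / (2*r^2))) ≤
      (θ / N) * Real.exp (-((N:ℝ)^2/(2*r^2))) * Real.exp (-(((N:ℝ)/r^2) * θ)) *
        Real.exp (-((N:ℝ)/r^2))^j := by
  have hNpos : (0:ℝ) < N := by exact_mod_cast Nat.pos_of_ne_zero (by omega)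
  have hj : (0:ℝ) ≤ j := Nat.cast_nonneg j
  set y : ℝ := θ + ((N:ℝ) + j) with hy
  have hyN : (N:ℝ) ≤ y := by simp only [hy]; linarith
  have hypos : 0 < y := lt_of_lt_of_le hNpos hyN
  have hsin : |Real.sin (Real.pi * y)| ≤ Real.pi * θ := by
    have hpy : Real.pi * y = Real.pi * θ + ((N + j : ℕ) : ℤ) * Real.pi := by push_cast; ring
    rw [hpy, Real.sin_add_int_mul_pi, abs_mul]
    have habs : |((-1:ℝ) ^ (((N + j : ℕ)) : ℤ))| = 1 := by
      rw [zpow_natCast, abs_pow, abs_neg, abs_one, one_pow]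
    rw [habs, one_mul]
    calc |Real.sin (Real.pi * θ)| ≤ |Real.pi * θ| := Real.abs_sin_le_abs
      _ = Real.pi * θ := abs_of_nonneg (by positivity)
  have hsincg : |sincg y| ≤ θ / N := by
    unfold sincg
    rw [if_neg (ne_of_gt hypos), abs_div, abs_of_nonneg (by positivity : (0:ℝ) ≤ Real.pi * y)]
    rw [div_le_div_iff₀ (by positivity) hNpos]
    calc |Real.sin (Real.pi * y)| * N ≤ (Real.pi * θ) * y := by
          apply mul_le_mul hsin hyN (le_of_lt hNpos) (by positivity)
      _ ≤ θ * (Real.pi * y) := by ring_nf; exact le_refl _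
  have hexp : Real.exp (-(y^2 / (2*r^2))) ≤
      Real.exp (-((N:ℝ)^2/(2*r^2))) * Real.exp (-(((N:ℝ)/r^2) * θ)) *
        Real.exp (-((N:ℝ)/r^2))^j := by
    rw [← Real.exp_nat_mul, ← Real.exp_add, ← Real.exp_add, Real.exp_le_exp]
    have h2 : (N:ℝ)^2 + 2*N*θ + 2*N*j ≤ y^2 := by
      rw [hy]; nlinarith [sq_nonneg (θ + (j:ℝ))]
    calc -(y^2/(2*r^2)) ≤ -(((N:ℝ)^2 + 2*N*θ + 2*N*j)/(2*r^2)) := by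
          exact neg_le_neg (div_le_div_of_nonneg_right h2 (by positivity))
      _ = -((N:ℝ)^2/(2*r^2)) + -((N:ℝ)/r^2 * θ) + (j:ℝ) * -((N:ℝ)/r^2) := by
          field_simp; ring
  calc |sincg y| * Real.exp (-(y^2 / (2*r^2)))
      ≤ (θ / N) * (Real.exp (-((N:ℝ)^2/(2*r^2))) * Real.exp (-(((N:ℝ)/r^2) * θ)) *
        Real.exp (-((N:ℝ)/r^2))^j) := by
        apply mul_le_mul hsincg hexp (le_of_lt (Real.exp_pos _)) (by positivity)
    _ = _ := by ring

theorem stmt15 (d : ℝ) (hd : 0 < d) (f : ℂ → ℂ)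
    (hf : DifferentiableOn ℂ f {z : ℂ | |z.im| ≤ d})
    (hb : ∃ B : ℝ, ∀ z ∈ {z : ℂ | |z.im| ≤ d}, ‖f z‖ ≤ B) :
    ∃ C' > 0, ∃ N₀ : ℕ, ∀ r : ℝ, 0 < r → ∀ h : ℝ, 0 < h → ∀ N' : ℕ, N₀ ≤ N' → ∀ t : ℝ,
      ‖
          (∑' k : ℤ, f (((k : ℝ) * h : ℝ)) * (sincg (t / h - k) : ℝ) *
            (Real.exp (-((t / h - k)^2 / (2 * r^2))) : ℝ)) -
          ∑ k ∈ Finset.Icc (⌊t / h⌋ - (N' : ℤ) + 1) (⌊t / h⌋ + (N' : ℤ)),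
            f (((k : ℝ) * h : ℝ)) * (sincg (t / h - k) : ℝ) *
              (Real.exp (-((t / h - k)^2 / (2 * r^2))) : ℝ)‖
        ≤ C' * (r^2 * Real.exp (3 / (2 * r^2)) / (N' : ℝ)^2) *
            Real.exp (-((N' : ℝ)^2 / (2 * r^2))) := by
  obtain ⟨B, hB⟩ := hb
  have hB0 : 0 ≤ B := le_trans (norm_nonneg _)
    (hB 0 (by simp [Set.mem_setOf_eq, le_of_lt hd]))
  refine ⟨2*B+1, by positivity, 1, ?_⟩
  intro r hr h hh N' hN' t
  set x : ℝ := t / h with hx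
  set m : ℤ := ⌊x⌋ with hm
  set g : ℤ → ℂ := fun k => f (((k : ℝ) * h : ℝ)) * (sincg (x - k) : ℝ) *
      (Real.exp (-((x - k)^2 / (2 * r^2))) : ℝ) with hg
  set s : Finset ℤ := Finset.Icc (m - (N' : ℤ) + 1) (m + (N' : ℤ)) with hs
  set θ : ℝ := x - m with hθ
  have hθ0 : 0 ≤ θ := by rw [hθ]; have := Int.floor_le x; linarith
  have hθ1 : θ ≤ 1 := by rw [hθ]; have := Int.lt_floor_add_one x; push_cast at this ⊢; linarith
  set φ : ℝ := 1 - θ with hφ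
  have hφ0 : 0 ≤ φ := by rw [hφ]; linarith
  have hφ1 : φ ≤ 1 := by rw [hφ]; linarith
  have hN1 : 1 ≤ N' := hN'
  have hNpos : (0:ℝ) < N' := by exact_mod_cast Nat.pos_of_ne_zero (by omega)
  set a : ℝ := (N' : ℝ) / r^2 with ha
  have hapos : 0 < a := by rw [ha]; positivity
  set q : ℝ := Real.exp (-a) with hq
  have hq0 : 0 ≤ q := le_of_lt (Real.exp_pos _)
  have hq1 : q < 1 := by rw [hq, Real.exp_lt_one_iff]; linarith
  set c : ℝ := (N':ℝ)^2 / (2*r^2) with hc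
  -- norm of g
  have hgnorm : ∀ k : ℤ, ‖g k‖ ≤
      B * (|sincg (x - k)| * Real.exp (-((x - k)^2 / (2*r^2)))) := by
    intro k
    rw [hg]
    simp only [norm_mul, Complex.norm_real, Real.norm_eq_abs, Real.abs_exp]
    have hfk : ‖f (((k : ℝ) * h : ℝ))‖ ≤ B := by
      exact hB _ (by simp [Set.mem_setOf_eq, le_of_lt hd])
    calc ‖f (((k : ℝ) * h : ℝ))‖ * |sincg (x - k)| * Real.exp (-((x - k)^2 / (2*r^2)))
        ≤ B * |sincg (x - k)| * Real.exp (-((x - k)^2 / (2*r^2))) := by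
          apply mul_le_mul_of_nonneg_right _ (le_of_lt (Real.exp_pos _))
          exact mul_le_mul_of_nonneg_right hfk (abs_nonneg _)
      _ = B * (|sincg (x - k)| * Real.exp (-((x - k)^2 / (2*r^2)))) := by ring
  -- left tail
  set DL : ℝ := B * ((θ/N') * Real.exp (-c) * Real.exp (-(a*θ))) with hDL
  set DR : ℝ := B * ((φ/N') * Real.exp (-c) * Real.exp (-(a*φ))) with hDR
  have hDL0 : 0 ≤ DL := by rw [hDL]; positivity
  have hDR0 : 0 ≤ DR := by rw [hDR]; positivity
  set iL : ℕ → ℤ := fun j => m - N' - j with hiL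
  set iR : ℕ → ℤ := fun j => m + N' + 1 + j with hiR
  have hL : ∀ j : ℕ, ‖g (iL j)‖ ≤ DL * q^j := by
    intro j
    have harg : x - ((iL j : ℤ) : ℝ) = θ + ((N' : ℝ) + j) := by
      rw [hiL, hθ]; push_cast; ring
    calc ‖g (iL j)‖ ≤ B * (|sincg (x - iL j)| * Real.exp (-((x - iL j)^2 / (2*r^2)))) :=
          hgnorm _
      _ ≤ B * ((θ/N') * Real.exp (-c) * Real.exp (-(a*θ)) * q^j) := by
          apply mul_le_mul_of_nonneg_left _ hB0
          rw [harg]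
          have := term_bd r hr N' hN1 θ hθ0 j
          calc |sincg (θ + ((N' : ℝ) + j))| * Real.exp (-((θ + ((N' : ℝ) + j))^2 / (2*r^2)))
              ≤ (θ / N') * Real.exp (-((N':ℝ)^2/(2*r^2))) * Real.exp (-(((N':ℝ)/r^2) * θ)) *
                Real.exp (-((N':ℝ)/r^2))^j := this
            _ = θ / ↑N' * Real.exp (-c) * Real.exp (-(a * θ)) * q ^ j := by
                rw [hc, ha, hq]
      _ = DL * q^j := by rw [hDL]; ring
  have hR : ∀ j : ℕ, ‖g (iR j)‖ ≤ DR * q^j := by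
    intro j
    have harg : x - ((iR j : ℤ) : ℝ) = -(φ + ((N' : ℝ) + j)) := by
      rw [hiR, hφ, hθ]; push_cast; ring
    have habs : |sincg (x - iR j)| = |sincg (φ + ((N' : ℝ) + j))| := by
      rw [harg, sincg_neg]
    have hsq : (x - ((iR j : ℤ) : ℝ))^2 = (φ + ((N' : ℝ) + j))^2 := by rw [harg]; ring
    calc ‖g (iR j)‖ ≤ B * (|sincg (x - iR j)| * Real.exp (-((x - iR j)^2 / (2*r^2)))) :=
          hgnorm _
      _ ≤ B * ((φ/N') * Real.exp (-c) * Real.exp (-(a*φ)) * q^j) := by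
          apply mul_le_mul_of_nonneg_left _ hB0
          rw [habs, hsq]
          have := term_bd r hr N' hN1 φ hφ0 j
          calc |sincg (φ + ((N' : ℝ) + j))| * Real.exp (-((φ + ((N' : ℝ) + j))^2 / (2*r^2)))
              ≤ (φ / N') * Real.exp (-((N':ℝ)^2/(2*r^2))) * Real.exp (-(((N':ℝ)/r^2) * φ)) *
                Real.exp (-((N':ℝ)/r^2))^j := this
            _ = φ / ↑N' * Real.exp (-c) * Real.exp (-(a * φ)) * q ^ j := by
                rw [hc, ha, hq]
      _ = DR * q^j := by rw [hDR]; ring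
  -- injectivity
  have hiLinj : Function.Injective iL := by
    intro j1 j2 hj; simp only [hiL] at hj; omega
  have hiRinj : Function.Injective iR := by
    intro j1 j2 hj; simp only [hiR] at hj; omega
  set uL : ℤ → ℝ := Set.indicator {k : ℤ | k ≤ m - (N':ℤ)} (fun k => ‖g k‖) with huL
  set uR : ℤ → ℝ := Set.indicator {k : ℤ | m + (N':ℤ) + 1 ≤ k} (fun k => ‖g k‖) with huR
  have huL_comp : ∀ j : ℕ, uL (iL j) = ‖g (iL j)‖ := by
    intro j
    apply Set.indicator_of_mem
    simp only [hiL, Set.mem_setOf_eq]; omega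
  have huR_comp : ∀ j : ℕ, uR (iR j) = ‖g (iR j)‖ := by
    intro j
    apply Set.indicator_of_mem
    simp only [hiR, Set.mem_setOf_eq]; omega
  have huL_zero : ∀ k ∉ Set.range iL, uL k = 0 := by
    intro k hk
    apply Set.indicator_of_notMem
    intro hmem
    simp only [Set.mem_setOf_eq] at hmem
    exact hk ⟨(m - N' - k).toNat, by simp only [hiL]; omega⟩
  have huR_zero : ∀ k ∉ Set.range iR, uR k = 0 := by
    intro k hk
    apply Set.indicator_of_notMem
    intro hmem
    simp only [Set.mem_setOf_eq] at hmem
    exact hk ⟨(k - (m + N' + 1)).toNat, by simp only [hiR]; omega⟩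
  have hsupL : Function.support uL ⊆ Set.range iL := by
    intro k hk
    by_contra hmem
    exact hk (huL_zero k hmem)
  have hsupR : Function.support uR ⊆ Set.range iR := by
    intro k hk
    by_contra hmem
    exact hk (huR_zero k hmem)
  have hsumgeoL : Summable (fun j : ℕ => DL * q^j) :=
    (summable_geometric_of_lt_one hq0 hq1).mul_left _
  have hsumgeoR : Summable (fun j : ℕ => DR * q^j) :=
    (summable_geometric_of_lt_one hq0 hq1).mul_left _
  have hsumL' : Summable (fun j : ℕ => ‖g (iL j)‖) :=
    Summable.of_nonneg_of_le (fun j => norm_nonneg _) hL hsumgeoL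
  have hsumR' : Summable (fun j : ℕ => ‖g (iR j)‖) :=
    Summable.of_nonneg_of_le (fun j => norm_nonneg _) hR hsumgeoR
  have hsumL : Summable uL :=
    (hiLinj.summable_iff huL_zero).1 (hsumL'.congr (fun j => (huL_comp j).symm))
  have hsumR : Summable uR :=
    (hiRinj.summable_iff huR_zero).1 (hsumR'.congr (fun j => (huR_comp j).symm))
  have htsumL : ∑' k, uL k ≤ DL * (1-q)⁻¹ := by
    calc ∑' k, uL k = ∑' j, uL (iL j) := (hiLinj.tsum_eq hsupL).symm
      _ = ∑' j, ‖g (iL j)‖ := tsum_congr huL_comp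
      _ ≤ ∑' j, DL * q^j := Summable.tsum_le_tsum hL hsumL' hsumgeoL
      _ = DL * (1-q)⁻¹ := by rw [tsum_mul_left, tsum_geometric_of_lt_one hq0 hq1]
  have htsumR : ∑' k, uR k ≤ DR * (1-q)⁻¹ := by
    calc ∑' k, uR k = ∑' j, uR (iR j) := (hiRinj.tsum_eq hsupR).symm
      _ = ∑' j, ‖g (iR j)‖ := tsum_congr huR_comp
      _ ≤ ∑' j, DR * q^j := Summable.tsum_le_tsum hR hsumR' hsumgeoR
      _ = DR * (1-q)⁻¹ := by rw [tsum_mul_left, tsum_geometric_of_lt_one hq0 hq1]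
  -- the complement indicator splits
  have hvsplit : ∀ k : ℤ,
      Set.indicator ((↑s : Set ℤ)ᶜ) (fun k => ‖g k‖) k = uL k + uR k := by
    intro k
    rw [huL, huR]
    by_cases h1 : k ≤ m - (N':ℤ)
    · rw [Set.indicator_of_mem (by
        simp only [Set.mem_compl_iff, Finset.coe_Icc, Set.mem_Icc, hs, not_and, not_le]
        omega), Set.indicator_of_mem (by exact h1),
        Set.indicator_of_notMem (by simp only [Set.mem_setOf_eq]; omega)]
      ring
    · by_cases h2 : m + (N':ℤ) + 1 ≤ k
      · rw [Set.indicator_of_mem (by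
          simp only [Set.mem_compl_iff, Finset.coe_Icc, Set.mem_Icc, hs, not_and, not_le]
          omega), Set.indicator_of_notMem (by simp only [Set.mem_setOf_eq]; omega),
          Set.indicator_of_mem (by exact h2)]
        ring
      · rw [Set.indicator_of_notMem (by
          simp only [Set.mem_compl_iff, Finset.coe_Icc, Set.mem_Icc, hs, not_not]
          omega), Set.indicator_of_notMem (by simp only [Set.mem_setOf_eq]; omega),
          Set.indicator_of_notMem (by simp only [Set.mem_setOf_eq]; omega)]
        ring
  have hvsum : Summable (Set.indicator ((↑s : Set ℤ)ᶜ) (fun k => ‖g k‖)) :=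
    (hsumL.add hsumR).congr (fun k => (hvsplit k).symm)
  have hsub : Summable (fun z : ↑((↑s : Set ℤ)ᶜ) => ‖g ↑z‖) :=
    summable_subtype_iff_indicator.2 hvsum
  have hsubg : Summable (fun z : ↑((↑s : Set ℤ)ᶜ) => g ↑z) := hsub.of_norm
  have hgsum : Summable g := s.summable_compl_iff.1 hsubg
  have hsplit := Summable.sum_add_tsum_compl (s := s) hgsum
  have hdiff : (∑' k, g k) - ∑ k ∈ s, g k = ∑' (z : ↑((↑s : Set ℤ)ᶜ)), g ↑z := by
    rw [← hsplit]; ring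
  rw [hdiff]
  -- final chain
  have h1q : 0 < 1 - q := by linarith
  have hDLb : DL * (1-q)⁻¹ ≤ B * Real.exp (-c) * (r^2/(N':ℝ)^2) := by
    have hkey : θ * Real.exp (-(a*θ)) ≤ (1-q)/a := by
      rw [le_div_iff₀ hapos]
      have hk := key_ineq hapos hθ1
      rw [← hq] at hk
      linarith
    have e1 : DL * (1-q)⁻¹ =
        B * Real.exp (-c) * ((θ * Real.exp (-(a*θ))) * ((1-q)⁻¹ / N')) := by
      rw [hDL]; ring
    have e2 : ((1-q)/a) * ((1-q)⁻¹ / N') = r^2/(N':ℝ)^2 := by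
      rw [ha]
      field_simp
    calc DL * (1-q)⁻¹ = B * Real.exp (-c) * ((θ * Real.exp (-(a*θ))) * ((1-q)⁻¹ / N')) := e1
      _ ≤ B * Real.exp (-c) * (((1-q)/a) * ((1-q)⁻¹ / N')) := by
          apply mul_le_mul_of_nonneg_left _ (by positivity)
          apply mul_le_mul_of_nonneg_right hkey (by positivity)
      _ = B * Real.exp (-c) * (r^2/(N':ℝ)^2) := by rw [e2]
  have hDRb : DR * (1-q)⁻¹ ≤ B * Real.exp (-c) * (r^2/(N':ℝ)^2) := by
    have hkey : φ * Real.exp (-(a*φ)) ≤ (1-q)/a := by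
      rw [le_div_iff₀ hapos]
      have hk := key_ineq hapos hφ1
      rw [← hq] at hk
      linarith
    have e1 : DR * (1-q)⁻¹ =
        B * Real.exp (-c) * ((φ * Real.exp (-(a*φ))) * ((1-q)⁻¹ / N')) := by
      rw [hDR]; ring
    have e2 : ((1-q)/a) * ((1-q)⁻¹ / N') = r^2/(N':ℝ)^2 := by
      rw [ha]
      field_simp
    calc DR * (1-q)⁻¹ = B * Real.exp (-c) * ((φ * Real.exp (-(a*φ))) * ((1-q)⁻¹ / N')) := e1
      _ ≤ B * Real.exp (-c) * (((1-q)/a) * ((1-q)⁻¹ / N')) := by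
          apply mul_le_mul_of_nonneg_left _ (by positivity)
          apply mul_le_mul_of_nonneg_right hkey (by positivity)
      _ = B * Real.exp (-c) * (r^2/(N':ℝ)^2) := by rw [e2]
  have hE : 1 ≤ Real.exp (3 / (2*r^2)) := Real.one_le_exp (by positivity)
  calc ‖∑' (z : ↑((↑s : Set ℤ)ᶜ)), g ↑z‖
      ≤ ∑' (z : ↑((↑s : Set ℤ)ᶜ)), ‖g ↑z‖ := norm_tsum_le_tsum_norm hsub
    _ = ∑' k, Set.indicator ((↑s : Set ℤ)ᶜ) (fun k => ‖g k‖) k := tsum_subtype ((↑s : Set ℤ)ᶜ) (fun k => ‖g k‖)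
    _ = ∑' k, (uL k + uR k) := tsum_congr hvsplit
    _ = (∑' k, uL k) + ∑' k, uR k := Summable.tsum_add hsumL hsumR
    _ ≤ DL * (1-q)⁻¹ + DR * (1-q)⁻¹ := add_le_add htsumL htsumR
    _ ≤ B * Real.exp (-c) * (r^2/(N':ℝ)^2) + B * Real.exp (-c) * (r^2/(N':ℝ)^2) :=
        add_le_add hDLb hDRb
    _ ≤ (2*B+1) * (r^2 * Real.exp (3 / (2 * r^2)) / (N':ℝ)^2) * Real.exp (-c) := by
        have hX : 0 < r^2/(N':ℝ)^2 * Real.exp (-c) := by positivity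
        have key : 2*B ≤ (2*B+1) * Real.exp (3 / (2 * r^2)) := by nlinarith [hE, hB0]
        calc B * Real.exp (-c) * (r^2/(N':ℝ)^2) + B * Real.exp (-c) * (r^2/(N':ℝ)^2)
            = 2*B * (r^2/(N':ℝ)^2 * Real.exp (-c)) := by ring
          _ ≤ ((2*B+1) * Real.exp (3 / (2 * r^2))) * (r^2/(N':ℝ)^2 * Real.exp (-c)) :=
              mul_le_mul_of_nonneg_right key hX.le
          _ = (2*B+1) * (r^2 * Real.exp (3 / (2 * r^2)) / (N':ℝ)^2) * Real.exp (-c) := by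
              ring
end

section
/- Let r > 0. Then for every ω ∈ ℝ, ∫_ℝ sinc(x)·exp(−x²/(2r²))·e^{−iωx} dx = (1/√π) ∫_{r(ω−π)/√2}^{r(ω+π)/√2} e^{−t²} dt, where sinc(x) = sin(πx)/(πx) for x ≠ 0 and sinc(0) = 1. Equivalently, the Fourier transform of the sinc-Gauss kernel equals (1/2)[erf(r(ω+π)/√2) − erf(r(ω−π)/√2)]. -/
open MeasureTheory intervalIntegral Complex Real in
lemma gaussFT (r : ℝ) (hr : 0 < r) (c : ℝ) :
    ∫ x : ℝ, Complex.exp (Complex.I * c * x) * (Real.exp (-(x^2 / (2*r^2))) : ℂ)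
      = ((r * Real.sqrt (2*Real.pi) * Real.exp (-(r^2 * c^2 / 2)) : ℝ) : ℂ) := by
  have hb : (0:ℝ) < 1/(2*r^2) := by positivity
  have h := fourierIntegral_gaussian (b := ((1/(2*r^2) : ℝ) : ℂ))
    (by rw [Complex.ofReal_re]; exact hb) (c : ℂ)
  have heq : ∀ x : ℝ, Complex.exp (Complex.I * c * x) * (Real.exp (-(x^2 / (2*r^2))) : ℂ)
      = Complex.exp (Complex.I * c * x) * Complex.exp (-((1/(2*r^2) : ℝ) : ℂ) * (x:ℂ)^2) := by
    intro x
    rw [Complex.ofReal_exp]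
    congr 2
    push_cast
    field_simp
  have h1 : (Real.pi : ℂ) / ((1/(2*r^2) : ℝ) : ℂ) = ((2*Real.pi*r^2 : ℝ) : ℂ) := by
    push_cast
    field_simp
  have h2 : (2*Real.pi*r^2 : ℝ) ^ ((1:ℝ)/2) = r * Real.sqrt (2*Real.pi) := by
    rw [← Real.sqrt_eq_rpow, show 2*Real.pi*r^2 = (2*Real.pi) * r^2 by ring,
      Real.sqrt_mul (by positivity), Real.sqrt_sq hr.le]
    ring
  have h3 : -((c:ℂ))^2 / (4 * ((1/(2*r^2) : ℝ) : ℂ)) = ((-(r^2*c^2/2) : ℝ) : ℂ) := by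
    have hr' : (r:ℂ) ≠ 0 := by norm_cast; exact hr.ne'
    push_cast
    field_simp
    ring
  rw [MeasureTheory.integral_congr_ae (Filter.Eventually.of_forall heq), h, h1,
    show (1/2 : ℂ) = (((1:ℝ)/2:ℝ):ℂ) by norm_num,
    ← Complex.ofReal_cpow (by positivity), h2, h3, ← Complex.ofReal_exp, ← Complex.ofReal_mul]

open MeasureTheory intervalIntegral Complex Real in
lemma sinc_rep(x : ℝ) : ((sincg x : ℝ) : ℂ)
    = (1/(2*Real.pi) : ℂ) * ∫ u in (-Real.pi)..Real.pi, Complex.exp (Complex.I * x * u) := by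
  have hpi : (Real.pi : ℂ) ≠ 0 := by exact_mod_cast Real.pi_ne_zero
  rcases eq_or_ne x 0 with hx | hx
  · subst hx
    simp [sincg]
    field_simp
    ring
  · have hc : (Complex.I * x : ℂ) ≠ 0 :=
      mul_ne_zero Complex.I_ne_zero (by exact_mod_cast hx)
    rw [integral_exp_mul_complex hc]
    have hsin : Complex.exp (Complex.I * x * Real.pi) - Complex.exp (Complex.I * x * (-Real.pi : ℝ))
        = 2 * Complex.I * Complex.sin (Real.pi * x) := by
      rw [Complex.sin]
      push_cast
      rw [show (-(↑Real.pi * ↑x) * Complex.I : ℂ) = Complex.I * ↑x * (-↑Real.pi) by ring,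
          show ((↑Real.pi * ↑x : ℂ) * Complex.I) = Complex.I * ↑x * ↑Real.pi by ring]
      ring_nf
      rw [Complex.I_sq]
      ring
    rw [hsin, sincg, if_neg hx]
    push_cast [← Complex.ofReal_sin]
    have hx' : (x:ℂ) ≠ 0 := by exact_mod_cast hx
    field_simp
    ring
    exact_mod_cast (Complex.ofReal_sin (π * x))

open MeasureTheory intervalIntegral Complex Real in
lemma realcalc (r ω : ℝ) (hr : 0 < r) :
    (1/(2*Real.pi)) * ∫ u in (-Real.pi)..Real.pi,
        r * Real.sqrt (2*Real.pi) * Real.exp (-(r^2*(u-ω)^2/2))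
    = (1 / Real.sqrt Real.pi) *
        ∫ t in (r * (ω - Real.pi) / Real.sqrt 2)..(r * (ω + Real.pi) / Real.sqrt 2),
          Real.exp (-t^2) := by
  have h2 : (0:ℝ) < Real.sqrt 2 := Real.sqrt_pos.mpr (by norm_num)
  have hc : r / Real.sqrt 2 ≠ 0 := by positivity
  rw [intervalIntegral.integral_const_mul]
  have hint : ∀ u : ℝ, Real.exp (-(r^2*(u-ω)^2/2))
      = (fun t => Real.exp (-t^2)) ((r / Real.sqrt 2) * (u - ω)) := by
    intro u
    simp only
    congr 1
    rw [mul_pow, div_pow, Real.sq_sqrt (by norm_num : (0:ℝ) ≤ 2)]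
    ring
  rw [intervalIntegral.integral_congr (fun u _ => hint u),
    intervalIntegral.integral_comp_sub_right
      (fun v => (fun t => Real.exp (-t^2)) ((r / Real.sqrt 2) * v)) ω,
    intervalIntegral.integral_comp_mul_left (fun t => Real.exp (-t^2)) hc]
  have heven : ∀ t : ℝ, Real.exp (-t^2) = Real.exp (-(-t)^2) := by
    intro t; rw [neg_pow]; ring_nf
  rw [intervalIntegral.integral_congr (fun t _ => heven t),
    intervalIntegral.integral_comp_neg (fun t => Real.exp (-t^2))]
  have hb1 : -(r / Real.sqrt 2 * (Real.pi - ω)) = r * (ω - Real.pi) / Real.sqrt 2 := by ring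
  have hb2 : -(r / Real.sqrt 2 * (-Real.pi - ω)) = r * (ω + Real.pi) / Real.sqrt 2 := by ring
  rw [hb1, hb2, smul_eq_mul]
  have e1 : Real.sqrt (2*Real.pi) = Real.sqrt 2 * Real.sqrt Real.pi :=
    Real.sqrt_mul (by norm_num) _
  have e2 : Real.sqrt 2 * Real.sqrt 2 = 2 := Real.mul_self_sqrt (by norm_num)
  have e3 : Real.sqrt Real.pi * Real.sqrt Real.pi = Real.pi :=
    Real.mul_self_sqrt Real.pi_pos.le
  have hp : (0:ℝ) < Real.sqrt Real.pi := Real.sqrt_pos.mpr Real.pi_pos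
  rw [e1]
  set J := ∫ t in (r * (ω - Real.pi) / Real.sqrt 2)..(r * (ω + Real.pi) / Real.sqrt 2),
    Real.exp (-t^2) with hJ
  field_simp
  linear_combination (J * (Real.sqrt Real.pi * Real.sqrt Real.pi)) * e2 + (2*J) * e3

open MeasureTheory intervalIntegral Complex Real in
theorem stmt17 (r : ℝ) (hr : 0 < r) (ω : ℝ) :
    ∫ x : ℝ, ((sincg x * Real.exp (-(x^2 / (2 * r^2))) : ℝ) : ℂ) *
        Complex.exp (-Complex.I * ω * x)
      = (((1 / Real.sqrt Real.pi) *
          ∫ t in (r * (ω - Real.pi) / Real.sqrt 2)..(r * (ω + Real.pi) / Real.sqrt 2),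
            Real.exp (-t^2) : ℝ) : ℂ) := by
  set F : ℝ → ℝ → ℂ := fun x u => Complex.exp (Complex.I * x * u) *
    (Complex.exp (-Complex.I * ω * x) * (Real.exp (-(x^2 / (2*r^2))) : ℂ)) with hF
  have hle : -Real.pi ≤ Real.pi := by linarith [Real.pi_pos]
  -- step 1: rewrite integrand
  have step1 : ∀ x : ℝ, ((sincg x * Real.exp (-(x^2 / (2 * r^2))) : ℝ) : ℂ) *
      Complex.exp (-Complex.I * ω * x)
      = (1/(2*Real.pi) : ℂ) * ∫ u in Set.Ioc (-Real.pi) Real.pi, F x u := by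
    intro x
    have : ∫ u in Set.Ioc (-Real.pi) Real.pi, F x u = ∫ u in (-Real.pi)..Real.pi, F x u :=
      (intervalIntegral.integral_of_le hle).symm
    rw [this, hF]
    simp only
    rw [intervalIntegral.integral_mul_const, Complex.ofReal_mul, sinc_rep x]
    ring
  rw [MeasureTheory.integral_congr_ae (Filter.Eventually.of_forall step1),
    MeasureTheory.integral_const_mul]
  -- step 2: Fubini
  have hinteg : Integrable (Function.uncurry F)
      (volume.prod (volume.restrict (Set.Ioc (-Real.pi) Real.pi))) := by
    have hgauss : Integrable (fun x : ℝ => Real.exp (-(1/(2*r^2)) * x^2)) volume :=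
      integrable_exp_neg_mul_sq (by positivity)
    have hdom : Integrable (fun p : ℝ × ℝ => Real.exp (-(1/(2*r^2)) * p.1^2) * 1)
        (volume.prod (volume.restrict (Set.Ioc (-Real.pi) Real.pi))) :=
      hgauss.mul_prod (integrable_const 1)
    apply hdom.mono'
    · apply Continuous.aestronglyMeasurable
      fun_prop
    · refine Filter.Eventually.of_forall (fun p => ?_)
      have : ‖Function.uncurry F p‖ = Real.exp (-(p.1^2 / (2*r^2))) := by
        rw [Function.uncurry, hF]
        simp only
        rw [norm_mul, norm_mul, Complex.norm_exp, Complex.norm_exp, Complex.norm_real]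
        simp [abs_of_pos (Real.exp_pos _)]
      rw [this]
      rw [show -(1/(2*r^2)) * p.1^2 = -(p.1^2 / (2*r^2)) by ring]
      simp
  rw [MeasureTheory.integral_integral_swap hinteg]
  -- step 3: inner integral via Gaussian FT
  have step3 : ∀ u : ℝ, ∫ x : ℝ, F x u
      = ((r * Real.sqrt (2*Real.pi) * Real.exp (-(r^2 * (u-ω)^2 / 2)) : ℝ) : ℂ) := by
    intro u
    have : ∀ x : ℝ, F x u
        = Complex.exp (Complex.I * ((u - ω : ℝ) : ℂ) * x) * (Real.exp (-(x^2 / (2*r^2))) : ℂ) := by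
      intro x
      rw [hF]
      simp only
      rw [← mul_assoc, ← Complex.exp_add]
      congr 2
      push_cast
      ring
    rw [MeasureTheory.integral_congr_ae (Filter.Eventually.of_forall this), gaussFT r hr (u - ω)]
  rw [MeasureTheory.integral_congr_ae
    (Filter.Eventually.of_forall (fun u => by rw [step3 u]) :
      ∀ᵐ u ∂(volume.restrict (Set.Ioc (-Real.pi) Real.pi)), _ )]
  have hcast : ∫ u in Set.Ioc (-Real.pi) Real.pi,
      ((r * Real.sqrt (2*Real.pi) * Real.exp (-(r^2 * (u-ω)^2 / 2)) : ℝ) : ℂ)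
      = ((∫ u in (-Real.pi)..Real.pi,
          r * Real.sqrt (2*Real.pi) * Real.exp (-(r^2 * (u-ω)^2 / 2)) : ℝ) : ℂ) := by
    rw [← intervalIntegral.integral_ofReal]
    exact (intervalIntegral.integral_of_le hle).symm
  rw [hcast, show (1/(2*(Real.pi:ℂ))) = ((1/(2*Real.pi) : ℝ) : ℂ) by push_cast; ring,
    ← Complex.ofReal_mul]
  norm_cast
  exact realcalc r ω hr
end
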